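/- arXiv:1504.08026 — 4 statements merged into one kernel-verified Lean document; each statement's English description precedes it below -/
import Mathlib

section
/- A group G is supramenable if and only if G contains no paradoxical subset. -/
open scoped ENNReal
open scoped Pointwise

/-- A left-invariant, finitely additive measure on all subsets of `G`, with values
in `[0,∞]`. -/
def IsLeftInvariantFAM (G : Type*) [Group G] (μ : Set G → ℝ≥0∞) : Prop :=
  μ ∅ = 0 ∧ (∀ E F : Set G, Disjoint E F → μ (E ∪ F) = μ E + μ F) ∧
    ∀ (g : G) (E : Set G), μ ((g * ·) '' E) = μ E

/-- A group is supramenable if every nonempty subset carries a left-invariant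
finitely additive measure giving it measure `1`. -/
def Supramenable (G : Type*) [Group G] : Prop :=
  ∀ A : Set G, A.Nonempty →
    ∃ μ : Set G → ℝ≥0∞, IsLeftInvariantFAM G μ ∧ μ A = 1

/-- A nonempty subset `A` of `G` is paradoxical: there are disjoint subsets `B, C ⊆ A`,
finite partitions `B = ⊔ Bᵢ`, `C = ⊔ Cⱼ` and elements `sᵢ, tⱼ ∈ G` with
`A = ⊔ sᵢBᵢ = ⊔ tⱼCⱼ`. -/
def Paradoxical {G : Type*} [Group G] (A : Set G) : Prop :=
  A.Nonempty ∧ ∃ (n m : ℕ) (B : Fin n → Set G) (C : Fin m → Set G)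
    (s : Fin n → G) (t : Fin m → G),
    (∀ i, B i ⊆ A) ∧ (∀ j, C j ⊆ A) ∧
    (∀ i i', i ≠ i' → Disjoint (B i) (B i')) ∧
    (∀ j j', j ≠ j' → Disjoint (C j) (C j')) ∧
    Disjoint (⋃ i, B i) (⋃ j, C j) ∧
    (⋃ i, (s i * ·) '' B i) = A ∧
    (∀ i i', i ≠ i' → Disjoint ((s i * ·) '' B i) ((s i' * ·) '' B i')) ∧
    (⋃ j, (t j * ·) '' C j) = A ∧
    (∀ j j', j ≠ j' → Disjoint ((t j * ·) '' C j) ((t j' * ·) '' C j'))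

namespace Supra

set_option linter.unusedSectionVars false

variable {G : Type*} [Group G]

/-- Equidecomposability in `G × ℕ` via finitely many left translations in the first
coordinate (second coordinate moves freely). -/
def Equi (U V : Set (G × ℕ)) : Prop :=
  ∃ (f : G × ℕ → G × ℕ) (S : Finset G), Set.InjOn f U ∧ f '' U = V ∧
    ∀ x ∈ U, ∃ g ∈ S, (f x).1 = g * x.1

theorem Equi.refl (U : Set (G × ℕ)) : Equi U U :=
  ⟨id, {1}, Set.injOn_id U, Set.image_id U,
    fun x _ => ⟨1, Finset.mem_singleton_self 1, (one_mul x.1).symm⟩⟩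

theorem Equi.symm {U V : Set (G × ℕ)} (h : Equi U V) : Equi V U := by
  classical
  obtain ⟨f, S, hinj, him, hmv⟩ := h
  refine ⟨Function.invFunOn f U, S.image (·⁻¹), ?_, ?_, ?_⟩
  · intro y hy y' hy' hee
    rw [← him] at hy hy'
    obtain ⟨x, hx, rfl⟩ := hy
    obtain ⟨x', hx', rfl⟩ := hy'
    rw [hinj.leftInvOn_invFunOn hx, hinj.leftInvOn_invFunOn hx'] at hee
    rw [hee]
  · rw [← him]
    exact hinj.invFunOn_image le_rfl
  · intro y hy
    rw [← him] at hy
    obtain ⟨x, hx, rfl⟩ := hy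
    obtain ⟨g, hg, hfx⟩ := hmv x hx
    refine ⟨g⁻¹, Finset.mem_image_of_mem _ hg, ?_⟩
    rw [hinj.leftInvOn_invFunOn hx, hfx, inv_mul_cancel_left]

theorem Equi.trans {U V W : Set (G × ℕ)} (h : Equi U V) (h' : Equi V W) : Equi U W := by
  classical
  obtain ⟨f, S, hinj, him, hmv⟩ := h
  obtain ⟨f', S', hinj', him', hmv'⟩ := h'
  refine ⟨f' ∘ f, S' * S, ?_, ?_, ?_⟩
  · intro x hx x' hx' he
    exact hinj hx hx' (hinj' (him ▸ Set.mem_image_of_mem f hx)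
      (him ▸ Set.mem_image_of_mem f hx') he)
  · rw [Set.image_comp, him, him']
  · intro x hx
    obtain ⟨g, hg, hfx⟩ := hmv x hx
    obtain ⟨g', hg', hfx'⟩ := hmv' (f x) (him ▸ Set.mem_image_of_mem f hx)
    exact ⟨g' * g, Finset.mul_mem_mul hg' hg, by simp [Function.comp, hfx', hfx, mul_assoc]⟩

theorem Equi.union {U V U' V' : Set (G × ℕ)} (h : Equi U V) (h' : Equi U' V')
    (hU : Disjoint U U') (hV : Disjoint V V') : Equi (U ∪ U') (V ∪ V') := by
  classical
  obtain ⟨f, S, hinj, him, hmv⟩ := h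
  obtain ⟨f', S', hinj', him', hmv'⟩ := h'
  refine ⟨fun x => if x ∈ U then f x else f' x, S ∪ S', ?_, ?_, ?_⟩
  · intro x hx x' hx' he
    have key : ∀ z, z ∈ U → (if z ∈ U then f z else f' z) ∈ V := by
      intro z hz; rw [if_pos hz]; exact him ▸ Set.mem_image_of_mem f hz
    have key' : ∀ z, z ∈ U' → (if z ∈ U then f z else f' z) ∈ V' := by
      intro z hz
      rw [if_neg (fun h => Set.disjoint_left.mp hU h hz)]
      exact him' ▸ Set.mem_image_of_mem f' hz
    simp only at he
    rcases hx with hx | hx <;> rcases hx' with hx' | hx'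
    · rw [if_pos hx, if_pos hx'] at he; exact hinj hx hx' he
    · exact absurd (he ▸ key x hx) (fun hc => Set.disjoint_left.mp hV hc (key' x' hx'))
    · exact absurd (he ▸ key' x hx) (fun hc => Set.disjoint_right.mp hV hc (key x' hx'))
    · rw [if_neg (fun h => Set.disjoint_left.mp hU h hx),
        if_neg (fun h => Set.disjoint_left.mp hU h hx')] at he
      exact hinj' hx hx' he
  · ext y
    simp only [Set.mem_image, Set.mem_union]
    constructor
    · rintro ⟨x, hx | hx, rfl⟩
      · rw [if_pos hx]; exact Or.inl (him ▸ Set.mem_image_of_mem f hx)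
      · rw [if_neg (fun h => Set.disjoint_left.mp hU h hx)]
        exact Or.inr (him' ▸ Set.mem_image_of_mem f' hx)
    · rintro (hy | hy)
      · rw [← him] at hy; obtain ⟨x, hx, rfl⟩ := hy
        exact ⟨x, Or.inl hx, if_pos hx⟩
      · rw [← him'] at hy; obtain ⟨x, hx, rfl⟩ := hy
        exact ⟨x, Or.inr hx, if_neg (fun h => Set.disjoint_left.mp hU h hx)⟩
  · intro x hx
    rcases hx with hx | hx
    · obtain ⟨g, hg, hfx⟩ := hmv x hx
      refine ⟨g, Finset.mem_union_left _ hg, ?_⟩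
      simp only [if_pos hx]; exact hfx
    · obtain ⟨g, hg, hfx⟩ := hmv' x hx
      refine ⟨g, Finset.mem_union_right _ hg, ?_⟩
      simp only [if_neg (fun h => Set.disjoint_left.mp hU h hx)]; exact hfx


/-- A "fiberwise" injection (fixing the `G`-coordinate) gives equidecomposability with
the image. -/
theorem equi_of_fst_eq {U : Set (G × ℕ)} (f : G × ℕ → G × ℕ) (hinj : Set.InjOn f U)
    (hfst : ∀ x ∈ U, (f x).1 = x.1) : Equi U (f '' U) :=
  ⟨f, {1}, hinj, rfl, fun x hx => ⟨1, Finset.mem_singleton_self 1, by rw [hfst x hx, one_mul]⟩⟩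

/-- Left translation of the first coordinate. -/
def trG (g : G) : G × ℕ → G × ℕ := fun x => (g * x.1, x.2)

theorem equi_trG (g : G) (U : Set (G × ℕ)) : Equi U (trG g '' U) := by
  refine ⟨trG g, {g}, ?_, rfl, fun x _ => ⟨g, Finset.mem_singleton_self g, rfl⟩⟩
  intro x _ x' _ he
  simp only [trG, Prod.mk.injEq] at he
  exact Prod.ext (mul_left_cancel he.1) he.2

/-- A level map (injective map of the second coordinate). -/
def lvl (h : ℕ → ℕ) : G × ℕ → G × ℕ := fun x => (x.1, h x.2)

theorem equi_lvl {h : ℕ → ℕ} (hinj : Function.Injective h) (U : Set (G × ℕ)) :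
    Equi U (lvl h '' U) := by
  refine equi_of_fst_eq (lvl h) ?_ (fun x _ => rfl)
  intro x _ x' _ he
  simp only [lvl, Prod.mk.injEq] at he
  exact Prod.ext he.1 (hinj he.2)

/-- Subequidecomposability. -/
def Subequi (U V : Set (G × ℕ)) : Prop := ∃ V', V' ⊆ V ∧ Equi U V'

theorem Equi.subequi {U V : Set (G × ℕ)} (h : Equi U V) : Subequi U V :=
  ⟨V, le_rfl, h⟩

theorem subequi_of_subset {U V : Set (G × ℕ)} (h : U ⊆ V) : Subequi U V :=
  ⟨U, h, Equi.refl U⟩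

theorem Subequi.refl (U : Set (G × ℕ)) : Subequi U U := subequi_of_subset le_rfl

theorem Equi.restrict {U V U' : Set (G × ℕ)} (h : Equi U V) (hU' : U' ⊆ U) :
    ∃ V', V' ⊆ V ∧ Equi U' V' := by
  obtain ⟨f, S, hinj, him, hmv⟩ := h
  exact ⟨f '' U', him ▸ Set.image_mono hU', f, S, hinj.mono hU', rfl,
    fun x hx => hmv x (hU' hx)⟩

theorem Subequi.trans {U V W : Set (G × ℕ)} (h : Subequi U V) (h' : Subequi V W) :
    Subequi U W := by
  obtain ⟨V', hV', hUV⟩ := h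
  obtain ⟨W', hW', hVW⟩ := h'
  obtain ⟨W'', hW'', hVW''⟩ := hVW.restrict hV'
  exact ⟨W'', le_trans hW'' hW', hUV.trans hVW''⟩

theorem Equi.trans_subequi {U V W : Set (G × ℕ)} (h : Equi U V) (h' : Subequi V W) :
    Subequi U W := h.subequi.trans h'

theorem Subequi.trans_equi {U V W : Set (G × ℕ)} (h : Subequi U V) (h' : Equi V W) :
    Subequi U W := h.trans h'.subequi

theorem Subequi.mono_right {U V W : Set (G × ℕ)} (h : Subequi U V) (hVW : V ⊆ W) :
    Subequi U W := h.trans (subequi_of_subset hVW)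

theorem Subequi.union {U V U' V' : Set (G × ℕ)} (h : Subequi U V) (h' : Subequi U' V')
    (hU : Disjoint U U') (hV : Disjoint V V') : Subequi (U ∪ U') (V ∪ V') := by
  obtain ⟨W, hW, hUW⟩ := h
  obtain ⟨W', hW', hUW'⟩ := h'
  exact ⟨W ∪ W', Set.union_subset_union hW hW',
    hUW.union hUW' hU (hV.mono hW hW')⟩

theorem equi_empty : Equi (∅ : Set (G × ℕ)) ∅ := Equi.refl ∅

theorem subequi_empty (V : Set (G × ℕ)) : Subequi ∅ V := ⟨∅, Set.empty_subset V, equi_empty⟩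


/-! ### Stacks of copies of a subset of `G` -/

/-- `n` disjoint copies of `A ⊆ G`, at levels `0, …, n-1`. -/
def cop (A : Set G) (n : ℕ) : Set (G × ℕ) := {x | x.1 ∈ A ∧ x.2 < n}

/-- One copy of `A` at level `k`. -/
def layer (A : Set G) (k : ℕ) : Set (G × ℕ) := {x | x.1 ∈ A ∧ x.2 = k}

theorem cop_zero (A : Set G) : cop A 0 = ∅ := by
  ext x; simp [cop]

theorem cop_succ (A : Set G) (n : ℕ) : cop A (n + 1) = cop A n ∪ layer A n := by
  ext x; simp only [cop, layer, Set.mem_setOf_eq, Set.mem_union]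
  constructor
  · rintro ⟨h1, h2⟩
    rcases Nat.lt_succ_iff_lt_or_eq.mp h2 with h | h
    · exact Or.inl ⟨h1, h⟩
    · exact Or.inr ⟨h1, h⟩
  · rintro (⟨h1, h2⟩ | ⟨h1, h2⟩)
    · exact ⟨h1, Nat.lt_succ_of_lt h2⟩
    · exact ⟨h1, by omega⟩

theorem disjoint_cop_layer (A B : Set G) {n m : ℕ} (h : n ≤ m) :
    Disjoint (cop A n) (layer B m) := by
  rw [Set.disjoint_left]
  rintro x ⟨_, h2⟩ ⟨_, h3⟩
  omega

theorem cop_mono {A : Set G} {n m : ℕ} (h : n ≤ m) : cop A n ⊆ cop A m :=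
  fun x hx => ⟨hx.1, lt_of_lt_of_le hx.2 h⟩

theorem equi_layer_cop_one (A : Set G) (k : ℕ) : Equi (layer A k) (cop A 1) := by
  have him : (fun x : G × ℕ => (x.1, 0)) '' layer A k = cop A 1 := by
    ext y
    simp only [Set.mem_image, layer, cop, Set.mem_setOf_eq]
    constructor
    · rintro ⟨x, ⟨h1, _⟩, rfl⟩; exact ⟨h1, Nat.zero_lt_one⟩
    · rintro ⟨h1, h2⟩
      exact ⟨(y.1, k), ⟨h1, rfl⟩, by rw [Prod.ext_iff]; exact ⟨rfl, by omega⟩⟩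
  have := equi_of_fst_eq (U := layer A k) (fun x => (x.1, 0)) ?_ (fun x _ => rfl)
  · rwa [him] at this
  · rintro x ⟨_, hx2⟩ x' ⟨_, hx2'⟩ he
    simp only [Prod.mk.injEq] at he
    exact Prod.ext he.1 (hx2.trans hx2'.symm)

theorem equi_cop_union_layer {A : Set G} {n m : ℕ} (hnm : n ≤ m) :
    Equi (cop A n ∪ layer A m) (cop A (n + 1)) := by
  classical
  set f : G × ℕ → G × ℕ := fun x => if x.2 = m then (x.1, n) else x with hf
  have hinj : Set.InjOn f (cop A n ∪ layer A m) := by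
    rintro x (⟨_, hx⟩ | ⟨_, hx⟩) x' (⟨_, hx'⟩ | ⟨_, hx'⟩) he <;>
      simp only [hf] at he
    · rw [if_neg (by omega), if_neg (by omega)] at he; exact he
    · rw [if_neg (by omega), if_pos hx'] at he
      exact absurd (congrArg Prod.snd he) (by simp; omega)
    · rw [if_pos hx, if_neg (by omega)] at he
      exact absurd (congrArg Prod.snd he) (by simp; omega)
    · rw [if_pos hx, if_pos hx'] at he
      simp only [Prod.mk.injEq] at he
      exact Prod.ext he.1 (hx.trans hx'.symm)
  have him : f '' (cop A n ∪ layer A m) = cop A (n + 1) := by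
    rw [Set.image_union, cop_succ]
    congr 1
    · ext y
      simp only [Set.mem_image, cop, Set.mem_setOf_eq, hf]
      constructor
      · rintro ⟨x, ⟨h1, h2⟩, rfl⟩
        rw [if_neg (by omega)]; exact ⟨h1, h2⟩
      · intro hy
        exact ⟨y, hy, by rw [if_neg (by omega)]⟩
    · ext y
      simp only [Set.mem_image, layer, Set.mem_setOf_eq, hf]
      constructor
      · rintro ⟨x, ⟨h1, h2⟩, rfl⟩
        rw [if_pos h2]; exact ⟨h1, rfl⟩
      · rintro ⟨h1, h2⟩
        exact ⟨(y.1, m), ⟨h1, rfl⟩, by rw [if_pos rfl, Prod.ext_iff]; exact ⟨rfl, h2.symm⟩⟩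
  have := equi_of_fst_eq (U := cop A n ∪ layer A m) f ?_ ?_
  · rwa [him] at this
  · exact hinj
  · intro x _
    simp only [hf]
    split <;> rfl

theorem pad {A : Set G} {n : ℕ} (h : Subequi (cop A (n + 1)) (cop A n)) :
    ∀ k, Subequi (cop A (n + k)) (cop A n) := by
  intro k
  induction k with
  | zero => exact Subequi.refl _
  | succ k IH =>
    have h1 : Subequi (cop A (n + k) ∪ layer A (n + k)) (cop A n ∪ layer A (n + k)) :=
      IH.union (Subequi.refl _) (disjoint_cop_layer A A le_rfl)
        (disjoint_cop_layer A A (Nat.le_add_right n k))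
    have h2 : Equi (cop A n ∪ layer A (n + k)) (cop A (n + 1)) :=
      equi_cop_union_layer (Nat.le_add_right n k)
    rw [← cop_succ] at h1
    have : n + (k+1) = n + k + 1 := by omega
    rw [this]
    exact ((h1.trans_equi h2).trans h)


/-! ### The Hall-type halving lemma -/

theorem hall_halving {A : Set G} {n : ℕ} (hn : 0 < n)
    (h : Subequi (cop A (2 * n)) (cop A n)) : Subequi (cop A 2) (cop A 1) := by
  classical
  obtain ⟨V', hV', F, S, hinj, him, hmv⟩ := h
  have hmem : ∀ (a : G) (i : ℕ), a ∈ A → i < 2 * n → F (a, i) ∈ cop A n := by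
    intro a i ha hi
    exact hV' (him ▸ Set.mem_image_of_mem F (⟨ha, hi⟩ : (a, i) ∈ cop A (2 * n)))
  set Nb : G → Finset G := fun a => (Finset.range (2 * n)).image (fun i => (F (a, i)).1)
    with hNb
  set t : ↥A × Fin 2 → Finset G := fun z => Nb z.1.val with ht
  have hall : ∀ s : Finset (↥A × Fin 2), s.card ≤ (s.biUnion t).card := by
    intro s
    set s0 : Finset ↥A := s.image Prod.fst with hs0
    have hcard1 : s.card ≤ 2 * s0.card := by
      have hsub : s ⊆ s0 ×ˢ (Finset.univ : Finset (Fin 2)) := by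
        intro z hz
        rw [Finset.mem_product]
        exact ⟨Finset.mem_image_of_mem Prod.fst hz, Finset.mem_univ _⟩
      calc s.card ≤ (s0 ×ˢ (Finset.univ : Finset (Fin 2))).card := Finset.card_le_card hsub
        _ = s0.card * 2 := by rw [Finset.card_product, Finset.card_univ, Fintype.card_fin]
        _ = 2 * s0.card := Nat.mul_comm _ _
    set B : Finset G := s0.biUnion (fun a => Nb a.val) with hB
    have hcard2 : s0.card * (2 * n) ≤ B.card * n := by
      have hmaps : ∀ z ∈ s0 ×ˢ Finset.range (2 * n),
          F ((z.1 : ↥A).val, z.2) ∈ B ×ˢ Finset.range n := by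
        rintro ⟨a, i⟩ hz
        rw [Finset.mem_product] at hz
        obtain ⟨ha, hi⟩ := hz
        rw [Finset.mem_range] at hi
        rw [Finset.mem_product]
        constructor
        · exact Finset.mem_biUnion.mpr ⟨a, ha,
            Finset.mem_image.mpr ⟨i, Finset.mem_range.mpr hi, rfl⟩⟩
        · rw [Finset.mem_range]
          exact (hmem a.val i a.prop hi).2
      have hinj2 : Set.InjOn (fun z : ↥A × ℕ => F ((z.1 : ↥A).val, z.2))
          (s0 ×ˢ Finset.range (2 * n) : Finset (↥A × ℕ)) := by
        rintro ⟨a, i⟩ hz ⟨a', i'⟩ hz' he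
        simp only [Finset.coe_product, Set.mem_prod, Finset.mem_coe, Finset.coe_range,
          Set.mem_Iio] at hz hz'
        have h1 : (a.val, i) ∈ cop A (2 * n) := ⟨a.prop, hz.2⟩
        have h2 : (a'.val, i') ∈ cop A (2 * n) := ⟨a'.prop, hz'.2⟩
        have := hinj h1 h2 he
        simp only [Prod.mk.injEq] at this
        exact Prod.ext (Subtype.ext this.1) this.2
      calc s0.card * (2 * n) = (s0 ×ˢ Finset.range (2 * n)).card := by
            rw [Finset.card_product, Finset.card_range]
        _ ≤ (B ×ˢ Finset.range n).card := Finset.card_le_card_of_injOn _ hmaps hinj2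
        _ = B.card * n := by rw [Finset.card_product, Finset.card_range]
    have hcard3 : 2 * s0.card ≤ B.card := by
      have : (2 * s0.card) * n ≤ B.card * n := by
        calc (2 * s0.card) * n = s0.card * (2 * n) := by ring
          _ ≤ B.card * n := hcard2
      exact Nat.le_of_mul_le_mul_right this hn
    have hBeq : s.biUnion t = B := by
      ext g
      simp only [Finset.mem_biUnion, hB, hs0, ht, Finset.mem_image]
      constructor
      · rintro ⟨z, hz, hg⟩
        exact ⟨z.1, ⟨z, hz, rfl⟩, hg⟩
      · rintro ⟨a, ⟨z, hz, rfl⟩, hg⟩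
        exact ⟨z, hz, hg⟩
    rw [hBeq]
    exact le_trans hcard1 hcard3
  obtain ⟨f, hfinj, hft⟩ := (Finset.all_card_le_biUnion_card_iff_exists_injective t).mp hall
  -- build the halving map
  set Ψ : G × ℕ → G × ℕ := fun x =>
    if hx : x.1 ∈ A ∧ x.2 < 2 then (f (⟨x.1, hx.1⟩, ⟨x.2, hx.2⟩), 0) else x with hΨ
  have key : ∀ x, x ∈ cop A 2 → ∃ (hx1 : x.1 ∈ A) (hx2 : x.2 < 2),
      Ψ x = (f (⟨x.1, hx1⟩, ⟨x.2, hx2⟩), 0) := by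
    rintro x ⟨hx1, hx2⟩
    exact ⟨hx1, hx2, by rw [hΨ]; exact dif_pos ⟨hx1, hx2⟩⟩
  have hNbspec : ∀ (a : ↥A) (l : Fin 2), ∃ i < 2 * n, (F (a.val, i)).1 = f (a, l) := by
    intro a l
    have := hft (a, l)
    rw [ht, hNb] at this
    simp only [Finset.mem_image, Finset.mem_range] at this
    obtain ⟨i, hi, hfi⟩ := this
    exact ⟨i, hi, hfi⟩
  refine ⟨Ψ '' cop A 2, ?_, Ψ, S, ?_, rfl, ?_⟩
  · rintro y ⟨x, hx, rfl⟩
    obtain ⟨hx1, hx2, heq⟩ := key x hx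
    rw [heq]
    obtain ⟨i, hi, hfi⟩ := hNbspec ⟨x.1, hx1⟩ ⟨x.2, hx2⟩
    exact ⟨hfi ▸ (hmem x.1 i hx1 hi).1, Nat.zero_lt_one⟩
  · intro x hx x' hx' he
    obtain ⟨hx1, hx2, heq⟩ := key x hx
    obtain ⟨hx1', hx2', heq'⟩ := key x' hx'
    rw [heq, heq'] at he
    simp only [Prod.mk.injEq] at he
    have := hfinj he.1
    simp only [Prod.mk.injEq, Subtype.ext_iff, Fin.ext_iff] at this
    exact Prod.ext this.1 this.2
  · intro x hx
    obtain ⟨hx1, hx2, heq⟩ := key x hx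
    obtain ⟨i, hi, hfi⟩ := hNbspec ⟨x.1, hx1⟩ ⟨x.2, hx2⟩
    obtain ⟨g, hg, hmv1⟩ := hmv (x.1, i) ⟨hx1, hi⟩
    refine ⟨g, hg, ?_⟩
    rw [heq]
    simp only
    rw [← hfi, hmv1]



/-! ### Extracting a paradoxical decomposition -/

theorem cop_one_eq_layer (A : Set G) : cop A 1 = layer A 0 := by
  ext x
  simp only [cop, layer, Set.mem_setOf_eq]
  constructor <;> rintro ⟨h1, h2⟩ <;> exact ⟨h1, by omega⟩

theorem layer_subset_cop {A : Set G} {k n : ℕ} (h : k < n) : layer A k ⊆ cop A n := by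
  rintro x ⟨h1, h2⟩; exact ⟨h1, by omega⟩

theorem pieces_of_equi_layer {Bs A : Set G} (h : Equi (layer Bs 0) (layer A 0)) :
    ∃ (k : ℕ) (Bi : Fin k → Set G) (s : Fin k → G),
      (∀ i, Bi i ⊆ Bs) ∧ (∀ i i', i ≠ i' → Disjoint (Bi i) (Bi i')) ∧
      (⋃ i, (s i * ·) '' Bi i) = A ∧
      (∀ i i', i ≠ i' → Disjoint ((s i * ·) '' Bi i) ((s i' * ·) '' Bi i')) := by
  classical
  obtain ⟨f, S, hinj, him, hmv⟩ := h
  set k := S.card with hk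
  set e : ↥S ≃ Fin k := S.equivFin with he
  set g : Fin k → G := fun i => (e.symm i).val with hg
  have hfb : ∀ b ∈ Bs, f (b, 0) ∈ layer A 0 := by
    intro b hb
    exact him ▸ Set.mem_image_of_mem f (⟨hb, rfl⟩ : (b, 0) ∈ layer Bs 0)
  set Bi : Fin k → Set G := fun i =>
    {b | b ∈ Bs ∧ f (b, 0) = (g i * b, 0) ∧ ∀ j, j < i → f (b, 0) ≠ (g j * b, 0)} with hBi
  have hmm : ∀ b ∈ Bs, ∃ i, f (b, 0) = (g i * b, 0) := by
    intro b hb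
    obtain ⟨g0, hg0, hfst⟩ := hmv (b, 0) ⟨hb, rfl⟩
    refine ⟨e ⟨g0, hg0⟩, ?_⟩
    have h2 : (f (b, 0)).2 = 0 := (hfb b hb).2
    have h1 : g (e ⟨g0, hg0⟩) = g0 := by
      show ((e.symm (e ⟨g0, hg0⟩) : ↥S) : G) = g0
      rw [Equiv.symm_apply_apply]
    rw [h1]
    exact Prod.ext hfst h2
  have hmin : ∀ b ∈ Bs, ∃ i, b ∈ Bi i := by
    intro b hb
    set J : Finset (Fin k) := Finset.univ.filter (fun i => f (b, 0) = (g i * b, 0)) with hJ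
    have hJne : J.Nonempty := by
      obtain ⟨i, hi⟩ := hmm b hb
      exact ⟨i, by simp [hJ, hi]⟩
    refine ⟨J.min' hJne, hb, ?_, ?_⟩
    · have := J.min'_mem hJne
      simp only [hJ, Finset.mem_filter] at this
      exact this.2
    · intro j hj hcon
      have hjJ : j ∈ J := by simp [hJ, hcon]
      exact absurd (J.min'_le j hjJ) (not_le.mpr hj)
  refine ⟨k, Bi, g, fun i b hb => hb.1, ?_, ?_, ?_⟩
  · intro i i' hne
    rw [Set.disjoint_left]
    rintro b ⟨hb, heq, hlt⟩ ⟨hb', heq', hlt'⟩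
    rcases lt_or_gt_of_ne hne with hc | hc
    · exact hlt' i hc heq
    · exact hlt i' hc heq'
  · ext a
    simp only [Set.mem_iUnion, Set.mem_image]
    constructor
    · rintro ⟨i, b, ⟨hb, heq, _⟩, rfl⟩
      have := hfb b hb
      rw [heq] at this
      exact this.1
    · intro ha
      have : (a, 0) ∈ layer A 0 := ⟨ha, rfl⟩
      rw [← him] at this
      obtain ⟨x, hx, hfx⟩ := this
      obtain ⟨hxBs, hx2⟩ := hx
      have hxe : x = (x.1, 0) := Prod.ext rfl hx2
      rw [hxe] at hfx
      obtain ⟨i, hi⟩ := hmin x.1 hxBs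
      refine ⟨i, x.1, hi, ?_⟩
      have : f (x.1, 0) = (g i * x.1, 0) := hi.2.1
      rw [hfx] at this
      exact (Prod.ext_iff.mp this.symm).1
  · intro i i' hne
    rw [Set.disjoint_left]
    rintro y ⟨b, hb, rfl⟩ ⟨b', hb', hyy⟩
    simp only at hyy
    have hfe : f (b, 0) = f (b', 0) := by
      rw [hb.2.1, hb'.2.1, Prod.mk.injEq]
      exact ⟨hyy.symm, rfl⟩
    have hbb : b = b' := by
      have := hinj (⟨hb.1, rfl⟩ : (b,0) ∈ layer Bs 0) (⟨hb'.1, rfl⟩ : (b',0) ∈ layer Bs 0) hfe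
      exact (Prod.ext_iff.mp this).1
    subst hbb
    rcases lt_or_gt_of_ne hne with hc | hc
    · exact hb'.2.2 i hc hb.2.1
    · exact hb.2.2 i' hc hb'.2.1

theorem disjoint_image_of_injOn {U U' T : Set (G × ℕ)} {f : G × ℕ → G × ℕ}
    (hinj : Set.InjOn f T) (hU : U ⊆ T) (hU' : U' ⊆ T) (hd : Disjoint U U') :
    Disjoint (f '' U) (f '' U') := by
  rw [Set.disjoint_left]
  rintro y ⟨x, hx, rfl⟩ ⟨x', hx', hyy⟩
  have := hinj (hU' hx') (hU hx) hyy
  subst this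
  exact Set.disjoint_left.mp hd hx hx'

theorem paradoxical_of_halving {A : Set G} (hA : A.Nonempty)
    (h : Subequi (cop A 2) (cop A 1)) : Paradoxical A := by
  obtain ⟨V', hV', F, S, hinj, him, hmv⟩ := h
  have hU0 : layer A 0 ⊆ cop A 2 := layer_subset_cop (by omega)
  have hU1 : layer A 1 ⊆ cop A 2 := layer_subset_cop (by omega)
  set W0 := F '' layer A 0 with hW0
  set W1 := F '' layer A 1 with hW1
  have hW0sub : W0 ⊆ cop A 1 := by
    rintro y ⟨x, hx, rfl⟩
    exact hV' (him ▸ Set.mem_image_of_mem F (hU0 hx))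
  have hW1sub : W1 ⊆ cop A 1 := by
    rintro y ⟨x, hx, rfl⟩
    exact hV' (him ▸ Set.mem_image_of_mem F (hU1 hx))
  have hWdis : Disjoint W0 W1 := by
    refine disjoint_image_of_injOn hinj hU0 hU1 ?_
    rw [Set.disjoint_left]
    rintro x ⟨_, h2⟩ ⟨_, h3⟩
    omega
  set Bs : Set G := {b | (b, 0) ∈ W0} with hBs
  set Cs : Set G := {b | (b, 0) ∈ W1} with hCs
  have hlayerW : ∀ (W : Set (G × ℕ)), W ⊆ cop A 1 → W = layer {b | (b, 0) ∈ W} 0 := by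
    intro W hW
    ext x
    simp only [layer, Set.mem_setOf_eq]
    constructor
    · intro hx
      have hx2 : x.2 = 0 := by have := (hW hx).2; omega
      have : x = (x.1, 0) := Prod.ext rfl hx2
      exact ⟨this ▸ hx, hx2⟩
    · rintro ⟨h1, h2⟩
      have : x = (x.1, 0) := Prod.ext rfl h2
      rw [this]
      exact h1
  have hBseq : W0 = layer Bs 0 := hlayerW W0 hW0sub
  have hCseq : W1 = layer Cs 0 := hlayerW W1 hW1sub
  have hBsA : Bs ⊆ A := fun b hb => (hW0sub hb).1
  have hCsA : Cs ⊆ A := fun b hb => (hW1sub hb).1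
  have hBsCs : Disjoint Bs Cs := by
    rw [Set.disjoint_left]
    intro b hb hb'
    exact Set.disjoint_left.mp hWdis hb hb'
  -- Equi (layer Bs 0) (layer A 0)
  have hEB : Equi (layer Bs 0) (layer A 0) := by
    rw [← hBseq]
    exact Equi.symm ⟨F, S, hinj.mono hU0, rfl, fun x hx => hmv x (hU0 hx)⟩
  have hEC : Equi (layer Cs 0) (layer A 0) := by
    rw [← hCseq]
    refine Equi.trans ?_ ((equi_layer_cop_one A 1).trans (by rw [cop_one_eq_layer]; exact Equi.refl _))
    exact Equi.symm ⟨F, S, hinj.mono hU1, rfl, fun x hx => hmv x (hU1 hx)⟩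
  obtain ⟨k, Bi, sB, hBiBs, hBidis, hBiun, hBiim⟩ := pieces_of_equi_layer hEB
  obtain ⟨m, Cj, tC, hCjCs, hCjdis, hCjun, hCjim⟩ := pieces_of_equi_layer hEC
  refine ⟨hA, k, m, Bi, Cj, sB, tC, fun i => (hBiBs i).trans hBsA,
    fun j => (hCjCs j).trans hCsA, hBidis, hCjdis, ?_, hBiun, hBiim, hCjun, hCjim⟩
  exact hBsCs.mono (Set.iUnion_subset hBiBs) (Set.iUnion_subset hCjCs)

theorem paradoxical_of_subequi_succ {A : Set G} (hA : A.Nonempty) {n : ℕ}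
    (h : Subequi (cop A (n + 1)) (cop A n)) : Paradoxical A := by
  rcases Nat.eq_zero_or_pos n with rfl | hn
  · exfalso
    obtain ⟨V', hV', f, S, hinj, him, hmv⟩ := h
    rw [cop_zero, Set.subset_empty_iff] at hV'
    rw [hV', Set.image_eq_empty] at him
    obtain ⟨a, ha⟩ := hA
    exact Set.eq_empty_iff_forall_notMem.mp him (a, 0) ⟨ha, Nat.zero_lt_one⟩
  · apply paradoxical_of_halving hA
    apply hall_halving hn
    have h2 : Subequi (cop A (n + n)) (cop A n) := pad h n
    have : 2 * n = n + n := by ring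
    rwa [this]



/-! ### Pairing and list realization -/

def ev : G × ℕ → G × ℕ := lvl (fun a => 2 * a)
def od : G × ℕ → G × ℕ := lvl (fun a => 2 * a + 1)

theorem ev_inj_lvl : Function.Injective (fun a : ℕ => 2 * a) := by
  intro a b hab; simp only at hab; omega
theorem od_inj_lvl : Function.Injective (fun a : ℕ => 2 * a + 1) := by
  intro a b hab; simp only at hab; omega

theorem equi_ev (U : Set (G × ℕ)) : Equi U (ev '' U) := equi_lvl ev_inj_lvl U
theorem equi_od (U : Set (G × ℕ)) : Equi U (od '' U) := equi_lvl od_inj_lvl U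

/-- Disjoint sum of two subsets of `G × ℕ`, via even/odd levels. -/
def pr (U V : Set (G × ℕ)) : Set (G × ℕ) := ev '' U ∪ od '' V

theorem disjoint_ev_od (U V : Set (G × ℕ)) : Disjoint (ev '' U) (od '' V) := by
  rw [Set.disjoint_left]
  rintro x ⟨y, _, rfl⟩ ⟨z, _, hz⟩
  have : (od z).2 = (ev y).2 := by rw [hz]
  simp only [ev, od, lvl] at this
  omega

theorem pr_congr {U U' V V' : Set (G × ℕ)} (h : Equi U U') (h' : Equi V V') :
    Equi (pr U V) (pr U' V') := by
  refine Equi.union ?_ ?_ (disjoint_ev_od U V) (disjoint_ev_od U' V')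
  · exact ((equi_ev U).symm.trans h).trans (equi_ev U')
  · exact ((equi_od V).symm.trans h').trans (equi_od V')

theorem pr_congr_sub {U U' V V' : Set (G × ℕ)} (h : Subequi U U') (h' : Subequi V V') :
    Subequi (pr U V) (pr U' V') := by
  refine Subequi.union ?_ ?_ (disjoint_ev_od U V) (disjoint_ev_od U' V')
  · exact ((equi_ev U).symm.trans_subequi h).trans_equi (equi_ev U')
  · exact ((equi_od V).symm.trans_subequi h').trans_equi (equi_od V')

theorem lvl_image_image (h h' : ℕ → ℕ) (U : Set (G × ℕ)) :
    lvl h '' (lvl h' '' U) = lvl (fun a => h (h' a)) '' U := by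
  rw [← Set.image_comp]
  rfl

theorem lvl_image_congr {h h' : ℕ → ℕ} (he : ∀ a, h a = h' a) (U : Set (G × ℕ)) :
    lvl h '' U = lvl h' '' U := by
  have : h = h' := funext he
  rw [this]

theorem pr_comm (U V : Set (G × ℕ)) : Equi (pr U V) (pr V U) := by
  classical
  set h : ℕ → ℕ := fun m => if m % 2 = 0 then m + 1 else m - 1 with hh
  have hinj : Function.Injective h := by
    intro a b hab
    simp only [hh] at hab
    split_ifs at hab <;> omega
  have q1 : lvl (G := G) h '' (ev '' U) = od '' U := by
    show lvl h '' (lvl _ '' U) = lvl _ '' U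
    rw [lvl_image_image]
    refine lvl_image_congr (fun a => ?_) U
    simp only [hh]
    rw [if_pos (by omega)]
  have q2 : lvl (G := G) h '' (od '' V) = ev '' V := by
    show lvl h '' (lvl _ '' V) = lvl _ '' V
    rw [lvl_image_image]
    refine lvl_image_congr (fun a => ?_) V
    simp only [hh]
    rw [if_neg (by omega)]
    omega
  have himg : lvl (G := G) h '' pr U V = pr V U := by
    simp only [pr, Set.image_union, q1, q2]
    rw [Set.union_comm]
  have := equi_lvl (G := G) hinj (pr U V)
  rwa [himg] at this

theorem pr_assoc (U V W : Set (G × ℕ)) : Equi (pr U (pr V W)) (pr (pr U V) W) := by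
  classical
  set h : ℕ → ℕ := fun m => if m % 2 = 0 then 2 * m else if m % 4 = 1 then m + 1
    else (m - 1) / 2 with hh
  have hinj : Function.Injective h := by
    intro a b hab
    simp only [hh] at hab
    split_ifs at hab <;> omega
  have q1 : lvl (G := G) h '' (ev '' U) = ev '' (ev '' U) := by
    show lvl h '' (lvl _ '' U) = lvl _ '' (lvl _ '' U)
    rw [lvl_image_image, lvl_image_image]
    refine lvl_image_congr (fun a => ?_) U
    simp only [hh]
    rw [if_pos (by omega)]
  have q2 : lvl (G := G) h '' (od '' (ev '' V)) = ev '' (od '' V) := by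
    show lvl h '' (lvl _ '' (lvl _ '' V)) = lvl _ '' (lvl _ '' V)
    rw [lvl_image_image, lvl_image_image, lvl_image_image]
    refine lvl_image_congr (fun a => ?_) V
    simp only [hh]
    rw [if_neg (by omega), if_pos (by omega)]
    omega
  have q3 : lvl (G := G) h '' (od '' (od '' W)) = od '' W := by
    show lvl h '' (lvl _ '' (lvl _ '' W)) = lvl _ '' W
    rw [lvl_image_image, lvl_image_image]
    refine lvl_image_congr (fun a => ?_) W
    simp only [hh]
    rw [if_neg (by omega), if_neg (by omega)]
    omega
  have himg : lvl (G := G) h '' pr U (pr V W) = pr (pr U V) W := by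
    calc lvl h '' pr U (pr V W)
        = lvl h '' (ev '' U) ∪ (lvl h '' (od '' (ev '' V)) ∪ lvl h '' (od '' (od '' W))) := by
          simp only [pr, Set.image_union]
      _ = ev '' (ev '' U) ∪ (ev '' (od '' V) ∪ od '' W) := by rw [q1, q2, q3]
      _ = pr (pr U V) W := by
          simp only [pr, Set.image_union]
          rw [Set.union_assoc]
  have := equi_lvl (G := G) hinj (pr U (pr V W))
  rwa [himg] at this

theorem pr_swap (U V W : Set (G × ℕ)) : Equi (pr U (pr V W)) (pr V (pr U W)) := by
  refine (pr_assoc U V W).trans (Equi.trans ?_ (pr_assoc V U W).symm)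
  exact pr_congr (pr_comm U V) (Equi.refl W)

/-- Realization of a list of subsets of `G × ℕ` as a disjoint sum. -/
def rl : List (Set (G × ℕ)) → Set (G × ℕ)
  | [] => ∅
  | U :: l => pr U (rl l)

theorem rl_perm {l l' : List (Set (G × ℕ))} (h : l.Perm l') : Equi (rl l) (rl l') := by
  induction h with
  | nil => exact Equi.refl _
  | cons x _ ih => exact pr_congr (Equi.refl x) ih
  | swap x y l => exact pr_swap y x (rl l)
  | trans _ _ ih1 ih2 => exact ih1.trans ih2

theorem rl_append (l l' : List (Set (G × ℕ))) : Equi (rl (l ++ l')) (pr (rl l) (rl l')) := by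
  induction l with
  | nil =>
    show Equi (rl l') (pr ∅ (rl l'))
    have : pr (∅ : Set (G × ℕ)) (rl l') = od '' (rl l') := by
      simp [pr]
    rw [this]
    exact equi_od _
  | cons a l ih =>
    show Equi (pr a (rl (l ++ l'))) _
    exact (pr_congr (Equi.refl a) ih).trans (pr_assoc a (rl l) (rl l'))


/-! ### Bounded sets -/

/-- `U` is bounded (relative to `A`) if it embeds into finitely many copies of `A`. -/
def Bdd (A : Set G) (U : Set (G × ℕ)) : Prop := ∃ n, Subequi U (cop A n)

theorem bdd_empty (A : Set G) : Bdd A (∅ : Set (G × ℕ)) := ⟨0, subequi_empty _⟩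

theorem bdd_of_subequi {A : Set G} {U V : Set (G × ℕ)} (h : Subequi U V) (hV : Bdd A V) :
    Bdd A U := by
  obtain ⟨n, hn⟩ := hV
  exact ⟨n, h.trans hn⟩

theorem bdd_mono {A : Set G} {U V : Set (G × ℕ)} (h : U ⊆ V) (hV : Bdd A V) : Bdd A U :=
  bdd_of_subequi (subequi_of_subset h) hV

theorem bdd_of_equi {A : Set G} {U V : Set (G × ℕ)} (h : Equi U V) (hV : Bdd A V) : Bdd A U :=
  bdd_of_subequi h.subequi hV

theorem bdd_cop (A : Set G) (n : ℕ) : Bdd A (cop A n) := ⟨n, Subequi.refl _⟩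

theorem cop_shift_eq (A : Set G) (n m : ℕ) :
    cop A n ∪ lvl (G := G) (· + n) '' cop A m = cop A (n + m) := by
  ext x
  simp only [cop, Set.mem_union, Set.mem_setOf_eq, Set.mem_image, lvl]
  constructor
  · rintro (⟨h1, h2⟩ | ⟨y, ⟨h1, h2⟩, rfl⟩)
    · exact ⟨h1, by omega⟩
    · exact ⟨h1, by omega⟩
  · rintro ⟨h1, h2⟩
    rcases Nat.lt_or_ge x.2 n with hc | hc
    · exact Or.inl ⟨h1, hc⟩
    · exact Or.inr ⟨(x.1, x.2 - n), ⟨h1, by omega⟩, Prod.ext rfl (by omega)⟩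

theorem disjoint_cop_shift (A : Set G) (n m : ℕ) :
    Disjoint (cop A n) (lvl (G := G) (· + n) '' cop A m) := by
  rw [Set.disjoint_left]
  rintro x ⟨_, h2⟩ ⟨y, _, rfl⟩
  simp only [lvl] at h2
  omega

theorem bdd_union {A : Set G} {U V : Set (G × ℕ)} (hU : Bdd A U) (hV : Bdd A V) :
    Bdd A (U ∪ V) := by
  obtain ⟨n, hn⟩ := hU
  obtain ⟨m, hm⟩ := hV
  have h1 : U ∪ V = U ∪ (V \ U) := by rw [Set.union_diff_self]
  have h2 : Subequi (V \ U) (lvl (G := G) (· + n) '' cop A m) :=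
    ((subequi_of_subset Set.diff_subset).trans hm).trans_equi
      (equi_lvl (fun a b hab => by simpa using hab) (cop A m))
  have h3 : Subequi (U ∪ (V \ U)) (cop A n ∪ lvl (G := G) (· + n) '' cop A m) :=
    hn.union h2 Set.disjoint_sdiff_right (disjoint_cop_shift A n m)
  rw [← h1, cop_shift_eq] at h3
  exact ⟨n + m, h3⟩

theorem bdd_pr {A : Set G} {U V : Set (G × ℕ)} (hU : Bdd A U) (hV : Bdd A V) :
    Bdd A (pr U V) :=
  bdd_union (bdd_of_equi (equi_ev U).symm hU) (bdd_of_equi (equi_od V).symm hV)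

theorem bdd_rl {A : Set G} : ∀ l : List (Set (G × ℕ)), (∀ U ∈ l, Bdd A U) → Bdd A (rl l)
  | [], _ => bdd_empty A
  | U :: l, h => bdd_pr (h U List.mem_cons_self) (bdd_rl l (fun V hV => h V (List.mem_cons_of_mem U hV)))

/-! ### The cone in the free abelian group on bounded sets -/

variable (A : Set G)

/-- The type of bounded subsets of `G × ℕ`. -/
def BSet := {U : Set (G × ℕ) // Bdd A U}

/-- The free abelian group on bounded subsets. -/
abbrev Gam := (BSet A) →₀ ℤ

/-- Basis vector. -/
noncomputable def dl (U : BSet A) : Gam A := Finsupp.single U 1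

/-- The generators of the positivity cone. -/
def gens : Set (Gam A) :=
  {w | ∃ U V : BSet A, Subequi U.val V.val ∧ w = dl A V - dl A U} ∪
  {w | ∃ U V W : BSet A, Disjoint U.val V.val ∧ W.val = U.val ∪ V.val ∧
    (w = dl A W - dl A U - dl A V ∨ w = dl A U + dl A V - dl A W)} ∪
  {w | ∃ U : BSet A, w = dl A U}

/-- The positivity cone. -/
noncomputable def Cone : AddSubmonoid (Gam A) := AddSubmonoid.closure (gens A)

theorem rl_single (U : Set (G × ℕ)) : rl [U] = ev '' U := by
  show pr U (rl []) = ev '' U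
  show pr U ∅ = ev '' U
  simp [pr]

theorem equi_rl_single (U : Set (G × ℕ)) : Equi (rl [U]) U := by
  rw [rl_single]; exact (equi_ev U).symm

theorem equi_rl_pair {U V : Set (G × ℕ)} (hd : Disjoint U V) : Equi (rl [U, V]) (U ∪ V) := by
  have h1 : rl [U, V] = ev '' U ∪ od '' (ev '' V) := by
    show pr U (pr V (rl [])) = _
    show pr U (pr V ∅) = _
    simp [pr]
  rw [h1]
  refine Equi.union (equi_ev U).symm ((equi_ev V).trans (equi_od _)).symm
    (disjoint_ev_od U (ev '' V)) hd

theorem subequi_rl_of_subequi {U V : Set (G × ℕ)} (h : Subequi U V) :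
    Subequi (rl [U]) (rl [V]) :=
  ((equi_rl_single U).trans_subequi h).trans_equi (equi_rl_single V).symm

/-- Decoding cone membership into a subequidecomposition. -/
theorem decode {w : Gam A} (hw : w ∈ Cone A) :
    ∃ P N : List (BSet A), w = (P.map (dl A)).sum - (N.map (dl A)).sum ∧
      Subequi (rl (N.map Subtype.val)) (rl (P.map Subtype.val)) := by
  refine AddSubmonoid.closure_induction ?_ ?_ ?_ hw
  · rintro x ((⟨U, V, hUV, rfl⟩ | ⟨U, V, W, hd, hW, (rfl | rfl)⟩) | ⟨U, rfl⟩)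
    · refine ⟨[V], [U], by simp, subequi_rl_of_subequi hUV⟩
    · refine ⟨[W], [U, V], by simp [sub_sub], ?_⟩
      show Subequi (rl [U.val, V.val]) (rl [W.val])
      refine ((equi_rl_pair hd).trans_subequi ?_)
      rw [← hW]
      exact (equi_rl_single W.val).symm.subequi
    · refine ⟨[U, V], [W], by simp [sub_sub], ?_⟩
      show Subequi (rl [W.val]) (rl [U.val, V.val])
      refine (equi_rl_single W.val).trans_subequi ?_
      rw [hW]
      exact (equi_rl_pair hd).symm.subequi
    · exact ⟨[U], [], by simp, subequi_empty _⟩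
  · exact ⟨[], [], by simp, Subequi.refl _⟩
  · rintro x y hx hy ⟨P1, N1, hid1, hs1⟩ ⟨P2, N2, hid2, hs2⟩
    refine ⟨P1 ++ P2, N1 ++ N2, ?_, ?_⟩
    · rw [List.map_append, List.map_append, List.sum_append, List.sum_append, hid1, hid2]
      abel
    · erw [List.map_append, List.map_append]
      refine ((rl_append _ _).trans_subequi ?_).trans_equi (rl_append _ _).symm
      exact pr_congr_sub hs1 hs2


/-! ### Abstract existence of states on a preordered abelian group -/

section State

variable {Γ : Type*} [AddCommGroup Γ] (C : AddSubmonoid Γ) (u : Γ)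

/-- The set of ratios `m/n` with `n•x ≤ m•u`. -/
def PS (x : Γ) : Set ℝ :=
  {r | ∃ (m : ℤ) (n : ℕ), 0 < n ∧ r = (m : ℝ) / (n : ℝ) ∧ m • u - n • x ∈ C}

theorem zsmul_u_nonneg (hu : u ∈ C) (hnu : -u ∉ C) (j : ℤ) (hj : j • u ∈ C) : 0 ≤ j := by
  by_contra hc
  push_neg at hc
  have h1 : (-j - 1).toNat • u ∈ C := AddSubmonoid.nsmul_mem C hu _
  have h2 : ((-j - 1).toNat : ℤ) • u ∈ C := by rwa [natCast_zsmul]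
  have h3 : (-j - 1) • u ∈ C := by
    rwa [Int.toNat_of_nonneg (by omega)] at h2
  have : -u ∈ C := by
    have := AddSubmonoid.add_mem C hj h3
    rwa [← add_smul, show j + (-j - 1) = -1 by ring, neg_smul, one_smul] at this
  exact hnu this

theorem PS_nonempty (horder : ∀ y : Γ, ∃ n : ℕ, n • u - y ∈ C ∧ n • u + y ∈ C) (x : Γ) :
    (PS C u x).Nonempty := by
  obtain ⟨n, h1, _⟩ := horder x
  exact ⟨(n : ℝ), (n : ℤ), 1, Nat.one_pos, by push_cast; ring,
    by rwa [natCast_zsmul, one_smul]⟩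

theorem PS_lower (hu : u ∈ C) (hnu : -u ∉ C)
    (horder : ∀ y : Γ, ∃ n : ℕ, n • u - y ∈ C ∧ n • u + y ∈ C) (x : Γ) :
    ∃ b : ℝ, ∀ r ∈ PS C u x, b ≤ r := by
  obtain ⟨n₁, _, h2⟩ := horder x
  refine ⟨-(n₁ : ℝ), ?_⟩
  rintro r ⟨m, n, hn, rfl, hmem⟩
  have key : (m + (n : ℤ) * (n₁ : ℤ)) • u ∈ C := by
    have hin : (n : ℕ) • ((n₁ : ℕ) • u + x) ∈ C := AddSubmonoid.nsmul_mem C h2 n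
    have := AddSubmonoid.add_mem C hmem hin
    have he : m • u - n • x + n • ((n₁ : ℕ) • u + x) = (m + (n : ℤ) * (n₁ : ℤ)) • u := by
      rw [add_smul, mul_smul, natCast_zsmul u n₁, natCast_zsmul (n₁ • u) n, smul_add]
      abel
    rwa [he] at this
  have hge : (0 : ℤ) ≤ m + (n : ℤ) * (n₁ : ℤ) := zsmul_u_nonneg C u hu hnu _ key
  have hn0 : (0 : ℝ) < (n : ℝ) := by exact_mod_cast hn
  rw [le_div_iff₀ hn0]
  have h4 : (-(n₁ : ℤ)) * (n : ℤ) ≤ m := by nlinarith [hge]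
  exact_mod_cast h4


/-- Upper normalized value. -/
noncomputable def pp (x : Γ) : ℝ := sInf (PS C u x)

theorem PS_bddBelow (hu : u ∈ C) (hnu : -u ∉ C)
    (horder : ∀ y : Γ, ∃ n : ℕ, n • u - y ∈ C ∧ n • u + y ∈ C) (x : Γ) :
    BddBelow (PS C u x) := by
  obtain ⟨b, hb⟩ := PS_lower C u hu hnu horder x
  exact ⟨b, fun r hr => hb r hr⟩

theorem pp_le (hu : u ∈ C) (hnu : -u ∉ C)
    (horder : ∀ y : Γ, ∃ n : ℕ, n • u - y ∈ C ∧ n • u + y ∈ C) {x : Γ} {r : ℝ}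
    (hr : r ∈ PS C u x) : pp C u x ≤ r :=
  csInf_le (PS_bddBelow C u hu hnu horder x) hr

theorem le_pp (horder : ∀ y : Γ, ∃ n : ℕ, n • u - y ∈ C ∧ n • u + y ∈ C) {x : Γ} {a : ℝ}
    (h : ∀ r ∈ PS C u x, a ≤ r) : a ≤ pp C u x :=
  le_csInf (PS_nonempty C u horder x) h

theorem PS_mem_iff_z (x : Γ) (m : ℤ) (n : ℕ) (hn : 0 < n) :
    m • u - (n : ℤ) • x ∈ C → ((m : ℝ) / (n : ℝ)) ∈ PS C u x := by
  intro h
  exact ⟨m, n, hn, rfl, by rwa [natCast_zsmul] at h⟩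

theorem PS_elim {x : Γ} {r : ℝ} (hr : r ∈ PS C u x) :
    ∃ (m : ℤ) (n : ℕ), 0 < n ∧ r = (m : ℝ) / (n : ℝ) ∧ m • u - (n : ℤ) • x ∈ C := by
  obtain ⟨m, n, hn, rfl, h⟩ := hr
  exact ⟨m, n, hn, rfl, by rwa [natCast_zsmul]⟩

theorem PS_add {x y : Γ} {r s : ℝ} (hr : r ∈ PS C u x) (hs : s ∈ PS C u y) :
    r + s ∈ PS C u (x + y) := by
  obtain ⟨m, n, hn, rfl, h1⟩ := PS_elim C u hr
  obtain ⟨m', n', hn', rfl, h2⟩ := PS_elim C u hs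
  have hkey : (m * n' + m' * n) • u - ((n * n' : ℕ) : ℤ) • (x + y)
      = (n' : ℤ) • (m • u - (n : ℤ) • x) + (n : ℤ) • (m' • u - (n' : ℤ) • y) := by
    rw [smul_sub, smul_sub, smul_smul, smul_smul, smul_smul, smul_smul]
    push_cast
    rw [add_smul, smul_add]
    rw [mul_comm (n' : ℤ) m, mul_comm (n' : ℤ) (n : ℤ), mul_comm (n : ℤ) m']
    abel
  have hm1 : (n' : ℤ) • (m • u - (n : ℤ) • x) ∈ C := by
    rw [natCast_zsmul]; exact AddSubmonoid.nsmul_mem C h1 n'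
  have hm2 : (n : ℤ) • (m' • u - (n' : ℤ) • y) ∈ C := by
    rw [natCast_zsmul]; exact AddSubmonoid.nsmul_mem C h2 n
  have hmem := AddSubmonoid.add_mem C hm1 hm2
  rw [← hkey] at hmem
  have hval : (m : ℝ) / n + (m' : ℝ) / n' = ((m * n' + m' * n : ℤ) : ℝ) / ((n * n' : ℕ) : ℝ) := by
    have hn0 : (n : ℝ) ≠ 0 := by positivity
    have hn0' : (n' : ℝ) ≠ 0 := by positivity
    push_cast
    field_simp
    try ring
  rw [hval]
  exact PS_mem_iff_z C u (x + y) _ _ (Nat.mul_pos hn hn') hmem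

theorem pp_add_le (hu : u ∈ C) (hnu : -u ∉ C)
    (horder : ∀ y : Γ, ∃ n : ℕ, n • u - y ∈ C ∧ n • u + y ∈ C) (x y : Γ) :
    pp C u (x + y) ≤ pp C u x + pp C u y := by
  have step1 : ∀ r ∈ PS C u x, pp C u (x + y) - r ≤ pp C u y := by
    intro r hr
    refine le_pp C u horder (fun s hs => ?_)
    have := pp_le C u hu hnu horder (PS_add C u hr hs)
    linarith
  have step2 : pp C u (x + y) - pp C u y ≤ pp C u x := by
    refine le_pp C u horder (fun r hr => ?_)
    have := step1 r hr
    linarith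
  linarith

theorem pp_zero (hu : u ∈ C) (hnu : -u ∉ C)
    (horder : ∀ y : Γ, ∃ n : ℕ, n • u - y ∈ C ∧ n • u + y ∈ C) : pp C u (0 : Γ) = 0 := by
  have h1 : pp C u (0 : Γ) ≤ 0 := by
    refine pp_le C u hu hnu horder (x := 0) (r := (0 : ℝ)) ?_
    refine ⟨0, 1, Nat.one_pos, by norm_num, ?_⟩
    simpa using AddSubmonoid.zero_mem C
  have h2 : (0 : ℝ) ≤ pp C u 0 := by
    refine le_pp C u horder (fun r hr => ?_)
    obtain ⟨m, n, hn, rfl, hmem⟩ := PS_elim C u hr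
    rw [smul_zero, sub_zero] at hmem
    have := zsmul_u_nonneg C u hu hnu m hmem
    positivity
  linarith

theorem pp_u (hu : u ∈ C) (hnu : -u ∉ C)
    (horder : ∀ y : Γ, ∃ n : ℕ, n • u - y ∈ C ∧ n • u + y ∈ C) : pp C u u = 1 := by
  have h1 : pp C u u ≤ 1 := by
    refine pp_le C u hu hnu horder (x := u) (r := (1 : ℝ)) ?_
    refine ⟨1, 1, Nat.one_pos, by norm_num, by simpa using AddSubmonoid.zero_mem C⟩
  have h2 : (1 : ℝ) ≤ pp C u u := by
    refine le_pp C u horder (fun r hr => ?_)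
    obtain ⟨m, n, hn, rfl, hmem⟩ := PS_elim C u hr
    have he : m • u - (n : ℤ) • u = (m - n) • u := by rw [sub_smul]
    rw [he] at hmem
    have hge := zsmul_u_nonneg C u hu hnu _ hmem
    have hn0 : (0 : ℝ) < (n : ℝ) := by exact_mod_cast hn
    rw [le_div_iff₀ hn0]
    have h5 : (n : ℤ) ≤ m := by omega
    have hcast : (n : ℝ) ≤ (m : ℝ) := by exact_mod_cast h5
    linarith
  linarith

theorem pp_neg_u (hu : u ∈ C) (hnu : -u ∉ C)
    (horder : ∀ y : Γ, ∃ n : ℕ, n • u - y ∈ C ∧ n • u + y ∈ C) : pp C u (-u) = -1 := by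
  have h1 : pp C u (-u) ≤ -1 := by
    refine pp_le C u hu hnu horder (x := -u) (r := (-1 : ℝ)) ?_
    refine ⟨-1, 1, Nat.one_pos, by norm_num, ?_⟩
    simpa using AddSubmonoid.zero_mem C
  have h2 : (-1 : ℝ) ≤ pp C u (-u) := by
    refine le_pp C u horder (fun r hr => ?_)
    obtain ⟨m, n, hn, rfl, hmem⟩ := PS_elim C u hr
    have he : m • u - (n : ℤ) • (-u) = (m + n) • u := by
      rw [smul_neg, sub_neg_eq_add, add_smul]
    rw [he] at hmem
    have hge := zsmul_u_nonneg C u hu hnu _ hmem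
    have hn0 : (0 : ℝ) < (n : ℝ) := by exact_mod_cast hn
    have h5 : -(n : ℤ) ≤ m := by omega
    have hcast : (-(n : ℤ) : ℝ) ≤ (m : ℝ) := by exact_mod_cast h5
    rw [neg_le, ← neg_div, div_le_iff₀ hn0]
    push_cast at hcast ⊢
    linarith
  linarith


theorem PS_nsmul_mem {x : Γ} {r : ℝ} (hr : r ∈ PS C u x) (k : ℕ) (hk : 0 < k) :
    (k : ℝ) * r ∈ PS C u (k • x) := by
  obtain ⟨m, n, hn, rfl, h1⟩ := PS_elim C u hr
  have hkey : ((k : ℤ) * m) • u - (n : ℤ) • (k • x) = (k : ℤ) • (m • u - (n : ℤ) • x) := by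
    rw [smul_sub, smul_smul, ← natCast_zsmul x k, smul_smul, smul_smul]
    rw [mul_comm (n : ℤ) (k : ℤ)]
  have hmem : ((k : ℤ) * m) • u - (n : ℤ) • (k • x) ∈ C := by
    rw [hkey, natCast_zsmul]
    exact AddSubmonoid.nsmul_mem C h1 k
  have hval : (k : ℝ) * ((m : ℝ) / n) = (((k : ℤ) * m : ℤ) : ℝ) / (n : ℝ) := by
    push_cast; ring
  rw [hval]
  exact PS_mem_iff_z C u (k • x) _ _ hn hmem

theorem pp_nsmul (hu : u ∈ C) (hnu : -u ∉ C)
    (horder : ∀ y : Γ, ∃ n : ℕ, n • u - y ∈ C ∧ n • u + y ∈ C) (k : ℕ) (hk : 0 < k) (x : Γ) :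
    pp C u (k • x) = (k : ℝ) * pp C u x := by
  have hk0 : (0 : ℝ) < (k : ℝ) := by exact_mod_cast hk
  have hle : pp C u (k • x) ≤ (k : ℝ) * pp C u x := by
    have h1 : pp C u (k • x) / (k : ℝ) ≤ pp C u x := by
      refine le_pp C u horder (fun r hr => ?_)
      have := pp_le C u hu hnu horder (PS_nsmul_mem C u hr k hk)
      rw [div_le_iff₀ hk0]
      linarith [this]
    calc pp C u (k • x) = (k : ℝ) * (pp C u (k • x) / (k : ℝ)) := by field_simp
      _ ≤ (k : ℝ) * pp C u x := by nlinarith [h1]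
  have hge : (k : ℝ) * pp C u x ≤ pp C u (k • x) := by
    refine le_pp C u horder (fun r hr => ?_)
    obtain ⟨m, n, hn, rfl, h1⟩ := PS_elim C u hr
    have hx : (m : ℝ) / ((n * k : ℕ) : ℝ) ∈ PS C u x := by
      refine PS_mem_iff_z C u x m (n * k) (Nat.mul_pos hn hk) ?_
      have : (n : ℤ) • (k • x) = ((n * k : ℕ) : ℤ) • x := by
        rw [← natCast_zsmul x k, smul_smul]
        push_cast
        ring_nf
      rwa [this] at h1
    have h2 := pp_le C u hu hnu horder hx
    have hn0 : (0 : ℝ) < (n : ℝ) := by exact_mod_cast hn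
    have hnk0 : (0 : ℝ) < ((n * k : ℕ) : ℝ) := by positivity
    rw [le_div_iff₀ hnk0] at h2
    rw [le_div_iff₀ hn0]
    push_cast at h2 ⊢
    nlinarith [h2]
  linarith

theorem pp_zsmul_u (hu : u ∈ C) (hnu : -u ∉ C)
    (horder : ∀ y : Γ, ∃ n : ℕ, n • u - y ∈ C ∧ n • u + y ∈ C) (j : ℤ) :
    pp C u (j • u) = (j : ℝ) := by
  rcases lt_trichotomy j 0 with hj | hj | hj
  · have hkey : j • u = (-j).toNat • (-u) := by
      rw [← natCast_zsmul (-u) (-j).toNat, Int.toNat_of_nonneg (by omega), smul_neg, neg_smul,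
        neg_neg]
    rw [hkey, pp_nsmul C u hu hnu horder _ (by omega), pp_neg_u C u hu hnu horder]
    have h6 : ((-j).toNat : ℤ) = -j := Int.toNat_of_nonneg (by omega)
    have h7 : (((-j).toNat : ℕ) : ℝ) = ((-j : ℤ) : ℝ) := by exact_mod_cast h6
    rw [h7]
    push_cast
    ring
  · rw [hj]; simp [pp_zero C u hu hnu horder]
  · have hkey : j • u = j.toNat • u := by
      rw [← natCast_zsmul u j.toNat, Int.toNat_of_nonneg (by omega)]
    rw [hkey, pp_nsmul C u hu hnu horder _ (by omega), pp_u C u hu hnu horder]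
    rw [mul_one]
    have h6 : (j.toNat : ℤ) = j := Int.toNat_of_nonneg (by omega)
    exact_mod_cast h6


/-- A partial state: an additive subgroup of `Γ × ℝ` (the graph of a partial additive
functional) sandwiched between the lower and upper values. -/
def GoodS (R : AddSubgroup (Γ × ℝ)) : Prop :=
  ((u, (1 : ℝ)) ∈ R) ∧ ∀ z ∈ R, z.2 ≤ pp C u z.1 ∧ -z.2 ≤ pp C u (-z.1)

theorem goodS_base (hu : u ∈ C) (hnu : -u ∉ C)
    (horder : ∀ y : Γ, ∃ n : ℕ, n • u - y ∈ C ∧ n • u + y ∈ C) :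
    GoodS C u (AddSubgroup.zmultiples ((u, (1 : ℝ)) : Γ × ℝ)) := by
  constructor
  · exact AddSubgroup.mem_zmultiples _
  · rintro z hz
    rw [AddSubgroup.mem_zmultiples_iff] at hz
    obtain ⟨k, rfl⟩ := hz
    have h1 : (k • ((u, (1:ℝ)) : Γ × ℝ)).1 = k • u := rfl
    have h2 : (k • ((u, (1:ℝ)) : Γ × ℝ)).2 = (k : ℝ) := by
      show k • (1 : ℝ) = (k : ℝ)
      rw [zsmul_eq_mul, mul_one]
    rw [h1, h2, pp_zsmul_u C u hu hnu horder k]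
    constructor
    · exact le_refl _
    · rw [← neg_zsmul, pp_zsmul_u C u hu hnu horder (-k)]
      push_cast
      exact le_refl _

theorem chain_ub {s : Set (AddSubgroup (Γ × ℝ))} (hs : ∀ R ∈ s, GoodS C u R)
    (c : Set (AddSubgroup (Γ × ℝ))) (hcs : c ⊆ s) (hc : IsChain (· ≤ ·) c)
    {R₀ : AddSubgroup (Γ × ℝ)} (hR₀ : R₀ ∈ c) :
    ∃ ub : AddSubgroup (Γ × ℝ), GoodS C u ub ∧ ∀ z ∈ c, z ≤ ub := by
  refine ⟨{ carrier := {z | ∃ R ∈ c, z ∈ R},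
            zero_mem' := ⟨R₀, hR₀, zero_mem R₀⟩,
            add_mem' := ?_,
            neg_mem' := ?_ }, ?_, ?_⟩
  · rintro a b ⟨R1, h1, ha⟩ ⟨R2, h2, hb⟩
    rcases hc.total h1 h2 with hle | hle
    · exact ⟨R2, h2, add_mem (hle ha) hb⟩
    · exact ⟨R1, h1, add_mem ha (hle hb)⟩
  · rintro a ⟨R1, h1, ha⟩
    exact ⟨R1, h1, neg_mem ha⟩
  · constructor
    · exact ⟨R₀, hR₀, (hs R₀ (hcs hR₀)).1⟩
    · rintro z ⟨R1, h1, hz⟩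
      exact (hs R1 (hcs h1)).2 z hz
  · intro z hz w hw
    exact ⟨z, hz, hw⟩


theorem extend_step (hu : u ∈ C) (hnu : -u ∉ C)
    (horder : ∀ y : Γ, ∃ n : ℕ, n • u - y ∈ C ∧ n • u + y ∈ C)
    {R : AddSubgroup (Γ × ℝ)} (hR : GoodS C u R) (x : Γ) :
    ∃ c : ℝ, GoodS C u (R ⊔ AddSubgroup.zmultiples ((x, c) : Γ × ℝ)) := by
  classical
  set L : Set ℝ := {d | ∃ (y : Γ) (r : ℝ) (k : ℕ), 0 < k ∧ (y, r) ∈ R ∧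
    d = (-pp C u (-(k • x) - y) - r) / k} with hL
  have cross : ∀ {y : Γ} {r : ℝ} {k : ℕ}, (y, r) ∈ R → 0 < k →
      ∀ {y' : Γ} {r' : ℝ} {k' : ℕ}, (y', r') ∈ R → 0 < k' →
      (-pp C u (-(k • x) - y) - r) / k ≤ (pp C u (k' • x + y') - r') / k' := by
    intro y r k hyR hk y' r' k' hy'R hk'
    have hkR : (0 : ℝ) < k := by exact_mod_cast hk
    have hk'R : (0 : ℝ) < k' := by exact_mod_cast hk'
    set a : Γ := k • (k' • x + y') with ha
    set hh : Γ := k' • y - k • y' with hhh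
    have hid1 : -a - hh = k' • (-(k • x) - y) := by
      rw [ha, hhh, smul_add, smul_sub, smul_neg, smul_comm k' k x]
      abel
    have e1 : pp C u (-a - hh) = (k' : ℝ) * pp C u (-(k • x) - y) := by
      rw [hid1, pp_nsmul C u hu hnu horder k' hk']
    have e2 : pp C u a = (k : ℝ) * pp C u (k' • x + y') := by
      rw [ha, pp_nsmul C u hu hnu horder k hk]
    have key2 : pp C u (-hh) ≤ pp C u a + pp C u (-a - hh) := by
      have hsplit : -hh = a + (-a - hh) := by abel
      rw [hsplit]
      exact pp_add_le C u hu hnu horder _ _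
    have hmemh : ((hh, (k' : ℝ) * r - (k : ℝ) * r') : Γ × ℝ) ∈ R := by
      have h1 : k' • ((y, r) : Γ × ℝ) - k • ((y', r') : Γ × ℝ) ∈ R :=
        sub_mem (AddSubmonoid.nsmul_mem R.toAddSubmonoid hyR k')
          (AddSubmonoid.nsmul_mem R.toAddSubmonoid hy'R k)
      have h2 : k' • ((y, r) : Γ × ℝ) - k • ((y', r') : Γ × ℝ)
          = ((hh, (k' : ℝ) * r - (k : ℝ) * r') : Γ × ℝ) := by
        rw [Prod.ext_iff]
        constructor
        · show k' • y - k • y' = hh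
          rw [hhh]
        · show k' • r - k • r' = (k' : ℝ) * r - (k : ℝ) * r'
          rw [nsmul_eq_mul, nsmul_eq_mul]
      rwa [h2] at h1
    have hsand := (hR.2 _ hmemh).2
    simp only at hsand
    -- hsand : -((k':ℝ) * r - k * r') ≤ pp C u (-hh)
    rw [div_le_div_iff₀ hkR hk'R]
    have hfin : -((k' : ℝ) * pp C u (-(k • x) - y)) ≤
        (k : ℝ) * pp C u (k' • x + y') + ((k' : ℝ) * r - (k : ℝ) * r') := by
      have t1 : -pp C u (-a - hh) ≤ pp C u a - pp C u (-hh) := by linarith [key2]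
      have t2 : -pp C u (-hh) ≤ (k' : ℝ) * r - (k : ℝ) * r' := by linarith [hsand]
      calc -((k' : ℝ) * pp C u (-(k • x) - y)) = -pp C u (-a - hh) := by rw [e1]
        _ ≤ pp C u a - pp C u (-hh) := t1
        _ ≤ (k : ℝ) * pp C u (k' • x + y') + ((k' : ℝ) * r - (k : ℝ) * r') := by
            rw [e2] at *
            linarith [t2]
    nlinarith [hfin]
  have hLne : L.Nonempty := by
    exact ⟨_, 0, 0, 1, Nat.one_pos, zero_mem R, rfl⟩
  have hLbdd : BddAbove L := by
    refine ⟨(pp C u (1 • x + 0) - 0) / ((1 : ℕ) : ℝ), ?_⟩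
    rintro d ⟨y, r, k, hk, hyR, rfl⟩
    exact cross hyR hk (zero_mem R) Nat.one_pos
  set c : ℝ := sSup L with hc
  have Hup : ∀ {y : Γ} {r : ℝ}, (y, r) ∈ R → ∀ {k : ℕ}, 0 < k →
      r + (k : ℝ) * c ≤ pp C u (y + k • x) := by
    intro y r hyR k hk
    have hkR : (0 : ℝ) < k := by exact_mod_cast hk
    have hub : c ≤ (pp C u (k • x + y) - r) / k := by
      refine csSup_le hLne ?_
      rintro d ⟨y1, r1, k1, hk1, hy1R, rfl⟩
      exact cross hy1R hk1 hyR hk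
    rw [le_div_iff₀ hkR] at hub
    have hco : k • x + y = y + k • x := add_comm _ _
    rw [hco] at hub
    linarith [hub]
  have Hdown : ∀ {y : Γ} {r : ℝ}, (y, r) ∈ R → ∀ {k : ℕ}, 0 < k →
      -(r + (k : ℝ) * c) ≤ pp C u (-(k • x) - y) := by
    intro y r hyR k hk
    have hkR : (0 : ℝ) < k := by exact_mod_cast hk
    have hmem : (-pp C u (-(k • x) - y) - r) / k ∈ L := ⟨y, r, k, hk, hyR, rfl⟩
    have := le_csSup hLbdd hmem
    rw [div_le_iff₀ hkR] at this
    nlinarith [this]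
  refine ⟨c, ?_, ?_⟩
  · exact AddSubgroup.mem_sup_left hR.1
  · rintro z hz
    rw [AddSubgroup.mem_sup] at hz
    obtain ⟨w, hw, v, hv, rfl⟩ := hz
    rw [AddSubgroup.mem_zmultiples_iff] at hv
    obtain ⟨j, rfl⟩ := hv
    obtain ⟨y, r⟩ := w
    have hz1 : ((y, r) + j • ((x, c) : Γ × ℝ)).1 = y + j • x := rfl
    have hz2 : ((y, r) + j • ((x, c) : Γ × ℝ)).2 = r + (j : ℝ) * c := by
      show r + j • c = r + (j : ℝ) * c
      rw [zsmul_eq_mul]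
    rw [hz1, hz2]
    rcases lt_trichotomy j 0 with hj | hj | hj
    · set k : ℕ := (-j).toNat with hk
      have hkpos : 0 < k := by omega
      have hkj : (k : ℤ) = -j := by rw [hk]; exact Int.toNat_of_nonneg (by omega)
      have hjx : j • x = -(k • x) := by
        rw [← natCast_zsmul x k, hkj, neg_smul, neg_neg]
      have hjc : (j : ℝ) = -(k : ℝ) := by
        have h2 : j = -(k : ℤ) := by omega
        exact_mod_cast h2
      rw [hjx, hjc]
      have hw' : ((-y, -r) : Γ × ℝ) ∈ R := by
        have := neg_mem hw
        rwa [show -((y, r) : Γ × ℝ) = ((-y, -r) : Γ × ℝ) from rfl] at this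
      constructor
      · have hD := Hdown hw' hkpos
        have harg : -(k • x) - -y = y + -(k • x) := by abel
        rw [harg] at hD
        linarith [hD]
      · have hU := Hup hw' hkpos
        have harg : -(y + -(k • x)) = -y + k • x := by abel
        rw [harg]
        linarith [hU]
    · subst hj
      simp only [Int.cast_zero, zero_smul, zero_mul, add_zero]
      exact hR.2 (y, r) hw
    · set k : ℕ := j.toNat with hk
      have hkpos : 0 < k := by omega
      have hjx : j • x = k • x := by
        rw [← natCast_zsmul x k, hk, Int.toNat_of_nonneg (by omega : (0:ℤ) ≤ j)]
      have hjc : (j : ℝ) = (k : ℝ) := by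
        have : (k : ℤ) = j := by rw [hk]; exact Int.toNat_of_nonneg (by omega)
        exact_mod_cast this.symm
      rw [hjx, hjc]
      constructor
      · exact Hup hw hkpos
      · have hneg : -(y + k • x) = -(k • x) - y := by abel
        rw [hneg]
        exact Hdown hw hkpos


theorem exists_state (hu : u ∈ C) (hnu : -u ∉ C)
    (horder : ∀ y : Γ, ∃ n : ℕ, n • u - y ∈ C ∧ n • u + y ∈ C) :
    ∃ f : Γ → ℝ, f u = 1 ∧ (∀ x y, f (x + y) = f x + f y) ∧ ∀ y ∈ C, 0 ≤ f y := by
  classical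
  set s : Set (AddSubgroup (Γ × ℝ)) := {R | GoodS C u R} with hs
  obtain ⟨R, _, hRmax⟩ := zorn_le_nonempty₀ s
    (fun c hcs hc y hy => by
      obtain ⟨ub, h1, h2⟩ := chain_ub C u (fun R hR => hR) c hcs hc hy
      exact ⟨ub, h1, h2⟩)
    _ (goodS_base C u hu hnu horder)
  have hRs : GoodS C u R := hRmax.1
  have htot : ∀ x : Γ, ∃ r : ℝ, (x, r) ∈ R := by
    intro x
    by_contra hcon
    push_neg at hcon
    obtain ⟨c, hGood⟩ := extend_step C u hu hnu horder hRs x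
    have hle : R ≤ R ⊔ AddSubgroup.zmultiples ((x, c) : Γ × ℝ) := le_sup_left
    have hback := hRmax.2 hGood hle
    have hxc : ((x, c) : Γ × ℝ) ∈ R :=
      hback (AddSubgroup.mem_sup_right (AddSubgroup.mem_zmultiples _))
    exact hcon c hxc
  have huniq : ∀ (x : Γ) (r r' : ℝ), (x, r) ∈ R → (x, r') ∈ R → r = r' := by
    intro x r r' h1 h2
    have h3 : ((0, r - r') : Γ × ℝ) ∈ R := by
      have hsub := sub_mem h1 h2
      have he : ((x, r) : Γ × ℝ) - (x, r') = ((0, r - r') : Γ × ℝ) := by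
        rw [Prod.ext_iff]
        exact ⟨by show x - x = 0; abel, rfl⟩
      rwa [he] at hsub
    have hsand := hRs.2 _ h3
    simp only at hsand
    obtain ⟨hs1, hs2⟩ := hsand
    rw [neg_zero] at hs2
    have e0 : pp C u (0 : Γ) = 0 := pp_zero C u hu hnu horder
    rw [e0] at hs1 hs2
    linarith
  choose f hf using htot
  refine ⟨f, ?_, ?_, ?_⟩
  · exact huniq u (f u) 1 (hf u) hRs.1
  · intro x y
    have hadd : ((x + y, f x + f y) : Γ × ℝ) ∈ R := by
      have := add_mem (hf x) (hf y)
      rwa [show ((x, f x) : Γ × ℝ) + (y, f y) = ((x + y, f x + f y) : Γ × ℝ) from rfl] at this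
    exact huniq (x + y) (f (x + y)) (f x + f y) (hf (x + y)) hadd
  · intro y hy
    have h1 := (hRs.2 _ (hf y)).2
    simp only at h1
    have h2 : pp C u (-y) ≤ 0 := by
      refine pp_le C u hu hnu horder (x := -y) (r := (0 : ℝ)) ?_
      refine ⟨0, 1, Nat.one_pos, by norm_num, ?_⟩
      simpa using hy
    linarith


end State

/-! ### The key non-membership -/

theorem perm_of_sum_eq {A : Set G} {l1 l2 : List (BSet A)}
    (h : (l1.map (dl A)).sum = (l2.map (dl A)).sum) : l1.Perm l2 := by
  classical
  have key : ∀ (l : List (BSet A)) (b : BSet A), ((l.map (dl A)).sum) b = (l.count b : ℤ) := by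
    intro l b
    induction l with
    | nil => simp
    | cons a t ih =>
      simp only [List.map_cons, List.sum_cons, Finsupp.add_apply, ih]
      by_cases hab : a = b
      · subst hab
        rw [List.count_cons_self]
        simp only [dl, Finsupp.single_apply, if_pos rfl]
        push_cast
        ring
      · rw [List.count_cons_of_ne hab]
        simp only [dl, Finsupp.single_apply, if_neg hab]
        ring
  rw [List.perm_iff_count]
  intro b
  have hb := congrArg (fun w : Gam A => w b) h
  rw [key, key] at hb
  exact_mod_cast hb

theorem not_neg_dl_mem_cone {A : Set G} (hA : A.Nonempty) (hnp : ¬ Paradoxical A) :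
    -(dl A ⟨cop A 1, bdd_cop A 1⟩) ∉ Cone A := by
  intro hmem
  set A0 : BSet A := ⟨cop A 1, bdd_cop A 1⟩ with hA0
  obtain ⟨P, N, hid, hsub⟩ := decode A hmem
  have hperm : (A0 :: P).Perm N := by
    apply perm_of_sum_eq
    simp only [List.map_cons, List.sum_cons]
    rw [eq_sub_iff_add_eq] at hid
    have : (P.map (dl A)).sum = -dl A A0 + (N.map (dl A)).sum := by
      rw [← hid]
    rw [this]; abel
  have hpermv : ((A0 :: P).map Subtype.val).Perm (N.map Subtype.val) := hperm.map _
  have hequi : Equi (rl ((A0 :: P).map Subtype.val)) (rl (N.map Subtype.val)) := rl_perm hpermv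
  have hstep : Subequi (rl (A0.val :: P.map Subtype.val)) (rl (P.map Subtype.val)) := by
    have h1 : (A0 :: P).map Subtype.val = A0.val :: P.map Subtype.val := rfl
    rw [h1] at hequi
    exact hequi.trans_subequi hsub
  have hiter : ∀ k : ℕ,
      Subequi (rl (List.replicate k A0.val ++ P.map Subtype.val)) (rl (P.map Subtype.val)) := by
    intro k
    induction k with
    | zero => exact Subequi.refl _
    | succ k ih =>
      have h1 : List.replicate (k + 1) A0.val ++ P.map Subtype.val
          = A0.val :: (List.replicate k A0.val ++ P.map Subtype.val) := by
        rw [List.replicate_succ]; rfl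
      rw [h1]
      show Subequi (pr A0.val (rl (List.replicate k A0.val ++ P.map Subtype.val))) _
      have h2 : Subequi (pr A0.val (rl (List.replicate k A0.val ++ P.map Subtype.val)))
          (pr A0.val (rl (P.map Subtype.val))) := pr_congr_sub (Subequi.refl _) ih
      exact h2.trans hstep
  have hcopk : ∀ k : ℕ,
      Subequi (cop A k) (rl (List.replicate k A0.val ++ P.map Subtype.val)) := by
    intro k
    induction k with
    | zero => rw [cop_zero]; exact subequi_empty _
    | succ k ih =>
      rw [cop_succ]
      have h1 : List.replicate (k + 1) A0.val ++ P.map Subtype.val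
          = A0.val :: (List.replicate k A0.val ++ P.map Subtype.val) := by
        rw [List.replicate_succ]; rfl
      rw [h1]
      show Subequi _ (pr A0.val (rl (List.replicate k A0.val ++ P.map Subtype.val)))
      have h2 : Subequi (cop A k)
          (od '' (rl (List.replicate k A0.val ++ P.map Subtype.val))) :=
        ih.trans_equi (equi_od _)
      have h3 : Subequi (layer A k) (ev '' A0.val) := by
        refine Equi.subequi ?_
        exact (equi_layer_cop_one A k).trans (equi_ev _)
      have h4 := h2.union h3 (disjoint_cop_layer A A le_rfl) (disjoint_ev_od _ _).symm
      have h5 : od '' (rl (List.replicate k A0.val ++ P.map Subtype.val)) ∪ ev '' A0.val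
          = pr A0.val (rl (List.replicate k A0.val ++ P.map Subtype.val)) := by
        rw [Set.union_comm]; rfl
      rwa [h5] at h4
  have hbdd : Bdd A (rl (P.map Subtype.val)) := by
    refine bdd_rl _ ?_
    rintro U hU
    erw [List.mem_map] at hU
    obtain ⟨b, _, rfl⟩ := hU
    exact b.prop
  obtain ⟨mq, hmq⟩ := hbdd
  have hfin : Subequi (cop A (mq + 1)) (cop A mq) :=
    ((hcopk (mq + 1)).trans (hiter (mq + 1))).trans hmq
  exact hnp (paradoxical_of_subequi_succ hA hfin)


/-! ### Cone membership helpers -/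

theorem dl_mem_cone {A : Set G} (U : BSet A) : dl A U ∈ Cone A :=
  AddSubmonoid.subset_closure (Set.mem_union_right _ ⟨U, rfl⟩)

theorem sub_mem_cone {A : Set G} {U V : BSet A} (h : Subequi U.val V.val) :
    dl A V - dl A U ∈ Cone A :=
  AddSubmonoid.subset_closure (Set.mem_union_left _ (Set.mem_union_left _ ⟨U, V, h, rfl⟩))

theorem union_mem_cone₁ {A : Set G} {U V W : BSet A} (hd : Disjoint U.val V.val)
    (hW : W.val = U.val ∪ V.val) : dl A W - dl A U - dl A V ∈ Cone A :=
  AddSubmonoid.subset_closure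
    (Set.mem_union_left _ (Set.mem_union_right _ ⟨U, V, W, hd, hW, Or.inl rfl⟩))

theorem union_mem_cone₂ {A : Set G} {U V W : BSet A} (hd : Disjoint U.val V.val)
    (hW : W.val = U.val ∪ V.val) : dl A U + dl A V - dl A W ∈ Cone A :=
  AddSubmonoid.subset_closure
    (Set.mem_union_left _ (Set.mem_union_right _ ⟨U, V, W, hd, hW, Or.inr rfl⟩))

theorem bdd_layer {A : Set G} (n : ℕ) : Bdd A (layer A n) :=
  bdd_of_equi (equi_layer_cop_one A n) (bdd_cop A 1)

theorem nsmul_sub_cop_mem {A : Set G} (n : ℕ) :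
    n • dl A ⟨cop A 1, bdd_cop A 1⟩ - dl A ⟨cop A n, bdd_cop A n⟩ ∈ Cone A := by
  induction n with
  | zero =>
    set Z : BSet A := ⟨cop A 0, bdd_cop A 0⟩ with hZ
    have hd : Disjoint (cop A 0) (cop A 0) := by
      rw [cop_zero]; exact disjoint_bot_left
    have hW : Z.val = Z.val ∪ Z.val := by simp
    have hmem := union_mem_cone₁ (A := A) (U := Z) (V := Z) (W := Z) hd hW
    have he : dl A Z - dl A Z - dl A Z = 0 • dl A ⟨cop A 1, bdd_cop A 1⟩ - dl A Z := by
      rw [zero_nsmul]; abel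
    rwa [he] at hmem
  | succ n ih =>
    set u := dl A ⟨cop A 1, bdd_cop A 1⟩ with hud
    set copn : BSet A := ⟨cop A n, bdd_cop A n⟩ with hcopn
    set layern : BSet A := ⟨layer A n, bdd_layer n⟩ with hlayern
    set copn1 : BSet A := ⟨cop A (n + 1), bdd_cop A (n + 1)⟩ with hcopn1
    have t1 : u - dl A layern ∈ Cone A :=
      sub_mem_cone (equi_layer_cop_one A n).subequi
    have t2 : dl A copn + dl A layern - dl A copn1 ∈ Cone A :=
      union_mem_cone₂ (disjoint_cop_layer A A le_rfl) (cop_succ A n)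
    have hmem := AddSubmonoid.add_mem _ ih (AddSubmonoid.add_mem _ t1 t2)
    have he : n • u - dl A copn + (u - dl A layern + (dl A copn + dl A layern - dl A copn1))
        = (n + 1) • u - dl A copn1 := by
      rw [succ_nsmul]; abel
    rwa [he] at hmem

theorem single_eq_zsmul_dl {A : Set G} (a : BSet A) (b : ℤ) :
    (Finsupp.single a b : Gam A) = b • dl A a := by
  show Finsupp.single a b = b • Finsupp.single a (1 : ℤ)
  rw [Finsupp.smul_single, smul_eq_mul, mul_one]

theorem order_unit {A : Set G} (y : Gam A) :
    ∃ n : ℕ, n • dl A ⟨cop A 1, bdd_cop A 1⟩ - y ∈ Cone A ∧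
      n • dl A ⟨cop A 1, bdd_cop A 1⟩ + y ∈ Cone A := by
  classical
  set u := dl A ⟨cop A 1, bdd_cop A 1⟩ with hud
  have hu : u ∈ Cone A := dl_mem_cone _
  have hsingle : ∀ (a : BSet A) (m : ℤ),
      ∃ n : ℕ, n • u - m • dl A a ∈ Cone A ∧ n • u + m • dl A a ∈ Cone A := by
    intro a m
    obtain ⟨na, hna⟩ := a.prop
    have base1 : na • u - dl A a ∈ Cone A := by
      have hmm := AddSubmonoid.add_mem _ (nsmul_sub_cop_mem (A := A) na)
        (sub_mem_cone (U := a) (V := ⟨cop A na, bdd_cop A na⟩) hna)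
      have he : na • u - dl A ⟨cop A na, bdd_cop A na⟩
          + (dl A ⟨cop A na, bdd_cop A na⟩ - dl A a) = na • u - dl A a := by abel
      rwa [he] at hmm
    have base2 : na • u + dl A a ∈ Cone A :=
      AddSubmonoid.add_mem _ (AddSubmonoid.nsmul_mem _ hu na) (dl_mem_cone a)
    rcases le_or_gt 0 m with hm | hm
    · set k : ℕ := m.toNat with hkd
      have hkm : (k : ℤ) = m := Int.toNat_of_nonneg hm
      refine ⟨k * na, ?_, ?_⟩
      · have he : (k * na) • u - m • dl A a = k • (na • u - dl A a) := by
          rw [← hkm, natCast_zsmul, mul_nsmul, smul_sub, smul_comm na k u]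
        rw [he]
        exact AddSubmonoid.nsmul_mem _ base1 k
      · have he : (k * na) • u + m • dl A a = k • (na • u + dl A a) := by
          rw [← hkm, natCast_zsmul, mul_nsmul, smul_add, smul_comm na k u]
        rw [he]
        exact AddSubmonoid.nsmul_mem _ base2 k
    · set k : ℕ := (-m).toNat with hkd
      have hkm : (k : ℤ) = -m := Int.toNat_of_nonneg (by omega)
      have hmk : m = -(k : ℤ) := by omega
      refine ⟨k * na, ?_, ?_⟩
      · have he : (k * na) • u - m • dl A a = k • (na • u + dl A a) := by
          rw [hmk, neg_smul, natCast_zsmul, sub_neg_eq_add, mul_nsmul, smul_add, smul_comm na k u]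
        rw [he]
        exact AddSubmonoid.nsmul_mem _ base2 k
      · have he : (k * na) • u + m • dl A a = k • (na • u - dl A a) := by
          rw [hmk, neg_smul, natCast_zsmul, mul_nsmul, smul_sub, sub_eq_add_neg, smul_comm na k u]
        rw [he]
        exact AddSubmonoid.nsmul_mem _ base1 k
  refine Finsupp.induction y
    ⟨0, by simpa using AddSubmonoid.zero_mem _, by simpa using AddSubmonoid.zero_mem _⟩ ?_
  rintro a b f _ _ ⟨n2, h21, h22⟩
  obtain ⟨n1, h11, h12⟩ := hsingle a b
  refine ⟨n1 + n2, ?_, ?_⟩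
  · have he : (n1 + n2) • u - (Finsupp.single a b + f)
        = (n1 • u - b • dl A a) + (n2 • u - f) := by
      rw [add_nsmul, single_eq_zsmul_dl]
      abel
    rw [he]
    exact AddSubmonoid.add_mem _ h11 h21
  · have he : (n1 + n2) • u + (Finsupp.single a b + f)
        = (n1 • u + b • dl A a) + (n2 • u + f) := by
      rw [add_nsmul, single_eq_zsmul_dl]
      abel
    rw [he]
    exact AddSubmonoid.add_mem _ h12 h22


/-! ### The easy direction -/

theorem fam_finite_additive {μ : Set G → ℝ≥0∞} (hμ : IsLeftInvariantFAM G μ) :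
    ∀ (n : ℕ) (T : Fin n → Set G), (∀ i j, i ≠ j → Disjoint (T i) (T j)) →
      μ (⋃ i, T i) = ∑ i, μ (T i) := by
  intro n
  induction n with
  | zero =>
    intro T _
    simp only [Set.iUnion_of_empty, Finset.univ_eq_empty, Finset.sum_empty]
    exact hμ.1
  | succ n ih =>
    intro T hd
    have hsplit : (⋃ i, T i) = (⋃ i : Fin n, T i.castSucc) ∪ T (Fin.last n) := by
      ext x
      simp only [Set.mem_iUnion, Set.mem_union]
      constructor
      · rintro ⟨i, hi⟩
        rcases Fin.eq_castSucc_or_eq_last i with ⟨j, rfl⟩ | rfl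
        · exact Or.inl ⟨j, hi⟩
        · exact Or.inr hi
      · rintro (⟨i, hi⟩ | hi)
        · exact ⟨i.castSucc, hi⟩
        · exact ⟨Fin.last n, hi⟩
    have hdis : Disjoint (⋃ i : Fin n, T i.castSucc) (T (Fin.last n)) := by
      rw [Set.disjoint_iUnion_left]
      intro i
      exact hd i.castSucc (Fin.last n) (Fin.ne_last_of_lt i.castSucc_lt_last)
    rw [hsplit, hμ.2.1 _ _ hdis, ih (fun i => T i.castSucc)
      (fun i j hij => hd i.castSucc j.castSucc (by simpa using hij)), Fin.sum_univ_castSucc]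

theorem no_paradoxical_of_supramenable (hsup : Supramenable G) (A : Set G) :
    ¬ Paradoxical A := by
  rintro ⟨hA, n, m, B, Cc, sB, tC, hBA, hCA, hBd, hCd, hBC, hBu, hBi, hCu, hCi⟩
  obtain ⟨μ, hμ, hμA⟩ := hsup A hA
  have hadditive := fam_finite_additive hμ
  have hB1 : μ A = ∑ i, μ (B i) := by
    rw [← hBu, hadditive n _ hBi]
    congr 1
    ext i
    exact hμ.2.2 (sB i) (B i)
  have hC1 : μ A = ∑ j, μ (Cc j) := by
    rw [← hCu, hadditive m _ hCi]
    congr 1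
    ext j
    exact hμ.2.2 (tC j) (Cc j)
  have hUB : μ (⋃ i, B i) = ∑ i, μ (B i) := hadditive n B hBd
  have hUC : μ (⋃ j, Cc j) = ∑ j, μ (Cc j) := hadditive m Cc hCd
  set UB := ⋃ i, B i with hUBd
  set UC := ⋃ j, Cc j with hUCd
  have hsubA : UB ∪ UC ⊆ A :=
    Set.union_subset (Set.iUnion_subset hBA) (Set.iUnion_subset hCA)
  have hAeq : A = (UB ∪ UC) ∪ (A \ (UB ∪ UC)) := by
    rw [Set.union_diff_self, Set.union_eq_self_of_subset_left hsubA]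
  have hdisj2 : Disjoint (UB ∪ UC) (A \ (UB ∪ UC)) := Set.disjoint_sdiff_right
  have hval : μ A = μ UB + μ UC + μ (A \ (UB ∪ UC)) := by
    calc μ A = μ ((UB ∪ UC) ∪ (A \ (UB ∪ UC))) := by rw [← hAeq]
      _ = μ (UB ∪ UC) + μ (A \ (UB ∪ UC)) := hμ.2.1 _ _ hdisj2
      _ = μ UB + μ UC + μ (A \ (UB ∪ UC)) := by rw [hμ.2.1 _ _ hBC]
  rw [hUB, ← hB1, hUC, ← hC1, hμA] at hval
  have hge : (2 : ℝ≥0∞) ≤ 1 := by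
    rw [hval]
    calc (2 : ℝ≥0∞) = 1 + 1 := by norm_num
      _ ≤ 1 + 1 + μ (A \ (UB ∪ UC)) := le_self_add
  norm_num at hge


/-! ### The hard direction -/

theorem supramenable_of_no_paradoxical (h : ∀ A : Set G, ¬ Paradoxical A) :
    Supramenable G := by
  intro A hA
  classical
  obtain ⟨f, hfu, hfadd, hfpos⟩ := exists_state (Cone A) (dl A ⟨cop A 1, bdd_cop A 1⟩)
    (dl_mem_cone _) (not_neg_dl_mem_cone hA (h A)) (fun y => order_unit y)
  have hf0 : f 0 = 0 := by
    have h00 := hfadd 0 0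
    rw [add_zero] at h00
    linarith
  have hfneg : ∀ w, f (-w) = -f w := by
    intro w
    have h1 := hfadd w (-w)
    rw [add_neg_cancel, hf0] at h1
    linarith
  have hfsub : ∀ w w', f (w - w') = f w - f w' := by
    intro w w'
    rw [sub_eq_add_neg, hfadd, hfneg]
    ring
  have hmono : ∀ w w', w' - w ∈ Cone A → f w ≤ f w' := by
    intro w w' hm
    have := hfpos _ hm
    rw [hfsub] at this
    linarith
  have hequal : ∀ (U V : BSet A), Equi U.val V.val → f (dl A U) = f (dl A V) := by
    intro U V hE
    have h1 := hmono _ _ (sub_mem_cone hE.subequi)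
    have h2 := hmono _ _ (sub_mem_cone hE.symm.subequi)
    linarith
  set μ : Set G → ℝ≥0∞ := fun E =>
    if hb : Bdd A (cop E 1) then ENNReal.ofReal (f (dl A ⟨cop E 1, hb⟩)) else ⊤ with hμd
  have hμ_of_bdd : ∀ (E : Set G) (hb : Bdd A (cop E 1)),
      μ E = ENNReal.ofReal (f (dl A ⟨cop E 1, hb⟩)) := by
    intro E hb
    rw [hμd]
    exact dif_pos hb
  have hμ_of_unbdd : ∀ (E : Set G), ¬ Bdd A (cop E 1) → μ E = ⊤ := by
    intro E hb
    rw [hμd]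
    exact dif_neg hb
  refine ⟨μ, ⟨?_, ?_, ?_⟩, ?_⟩
  · -- μ ∅ = 0
    have hce : cop (∅ : Set G) 1 = (∅ : Set (G × ℕ)) := by
      ext x; simp [cop]
    have hb : Bdd A (cop (∅ : Set G) 1) := by rw [hce]; exact bdd_empty A
    rw [hμ_of_bdd ∅ hb]
    set Z : BSet A := ⟨cop (∅ : Set G) 1, hb⟩ with hZ
    have hZv : Z.val = Z.val ∪ Z.val := by simp
    have hZd : Disjoint Z.val Z.val := by
      show Disjoint (cop (∅ : Set G) 1) (cop (∅ : Set G) 1)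
      rw [hce]
      exact disjoint_bot_left
    have hm1 := hfpos _ (dl_mem_cone Z)
    have hm2 := hfpos _ (union_mem_cone₁ hZd hZv)
    have he : dl A Z - dl A Z - dl A Z = -(dl A Z) := by abel
    rw [he, hfneg] at hm2
    have hzero : f (dl A Z) = 0 := le_antisymm (by linarith) hm1
    rw [hzero]
    simp
  · -- additivity
    intro E F hEF
    have hcup : cop (E ∪ F) 1 = cop E 1 ∪ cop F 1 := by
      ext x
      simp only [cop, Set.mem_setOf_eq, Set.mem_union, Set.mem_union]
      tauto
    have hcdisj : Disjoint (cop E 1) (cop F 1) := by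
      rw [Set.disjoint_left]
      rintro x ⟨h1, _⟩ ⟨h2, _⟩
      exact Set.disjoint_left.mp hEF h1 h2
    have hsubE : cop E 1 ⊆ cop (E ∪ F) 1 := fun x hx => ⟨Or.inl hx.1, hx.2⟩
    have hsubF : cop F 1 ⊆ cop (E ∪ F) 1 := fun x hx => ⟨Or.inr hx.1, hx.2⟩
    by_cases hbE : Bdd A (cop E 1) <;> by_cases hbF : Bdd A (cop F 1)
    · have hbEF : Bdd A (cop (E ∪ F) 1) := by rw [hcup]; exact bdd_union hbE hbF
      rw [hμ_of_bdd _ hbEF, hμ_of_bdd _ hbE, hμ_of_bdd _ hbF]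
      set U : BSet A := ⟨cop E 1, hbE⟩ with hU
      set V : BSet A := ⟨cop F 1, hbF⟩ with hV
      set W : BSet A := ⟨cop (E ∪ F) 1, hbEF⟩ with hW
      have hWv : W.val = U.val ∪ V.val := hcup
      have h1 := hfpos _ (union_mem_cone₁ (U := U) (V := V) (W := W) hcdisj hWv)
      have h2 := hfpos _ (union_mem_cone₂ (U := U) (V := V) (W := W) hcdisj hWv)
      rw [hfsub, hfsub] at h1
      rw [hfsub, hfadd] at h2
      have heq : f (dl A W) = f (dl A U) + f (dl A V) := by linarith
      rw [heq, ENNReal.ofReal_add (hfpos _ (dl_mem_cone U)) (hfpos _ (dl_mem_cone V))]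
    · have hbEF : ¬ Bdd A (cop (E ∪ F) 1) := fun hb => hbF (bdd_mono hsubF hb)
      rw [hμ_of_unbdd _ hbEF, hμ_of_unbdd _ hbF, add_top]
    · have hbEF : ¬ Bdd A (cop (E ∪ F) 1) := fun hb => hbE (bdd_mono hsubE hb)
      rw [hμ_of_unbdd _ hbEF, hμ_of_unbdd _ hbE, top_add]
    · have hbEF : ¬ Bdd A (cop (E ∪ F) 1) := fun hb => hbE (bdd_mono hsubE hb)
      rw [hμ_of_unbdd _ hbEF, hμ_of_unbdd _ hbE, top_add]
  · -- invariance
    intro g E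
    have hset : cop ((g * ·) '' E) 1 = trG g '' cop E 1 := by
      ext x
      simp only [cop, Set.mem_setOf_eq, Set.mem_image, trG]
      constructor
      · rintro ⟨⟨e, he, hex⟩, hx2⟩
        exact ⟨(e, x.2), ⟨he, hx2⟩, by rw [hex]⟩
      · rintro ⟨y, ⟨hy1, hy2⟩, rfl⟩
        exact ⟨⟨y.1, hy1, rfl⟩, hy2⟩
    have hEq : Equi (cop E 1) (cop ((g * ·) '' E) 1) := by
      rw [hset]
      exact equi_trG g _
    by_cases hbE : Bdd A (cop E 1)
    · have hbgE : Bdd A (cop ((g * ·) '' E) 1) := bdd_of_equi hEq.symm hbE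
      rw [hμ_of_bdd _ hbgE, hμ_of_bdd _ hbE]
      congr 1
      exact hequal ⟨_, hbgE⟩ ⟨_, hbE⟩ hEq.symm
    · have hbgE : ¬ Bdd A (cop ((g * ·) '' E) 1) := fun hb => hbE (bdd_of_equi hEq hb)
      rw [hμ_of_unbdd _ hbgE, hμ_of_unbdd _ hbE]
  · -- μ A = 1
    rw [hμ_of_bdd A (bdd_cop A 1), hfu]
    simp

end Supra

/-- A group is supramenable if and only if it contains no paradoxical subset. -/
theorem supramenable_iff_no_paradoxical (G : Type*) [Group G] :
    Supramenable G ↔ ∀ A : Set G, ¬ Paradoxical A := by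
  constructor
  · intro hsup A
    exact Supra.no_paradoxical_of_supramenable hsup A
  · intro h
    exact Supra.supramenable_of_no_paradoxical h
end

section
/- Let (A, G, {I_g}, {θ_g}) be a partial dynamical system and let I, J be G-invariant closed two-sided ideals of A (i.e., θ_g(I ∩ I_{g⁻¹}) ⊆ I for all g, and similarly for J). Then inside A ⋊ G, the ideals satisfy (I ⋊ G) ∩ (J ⋊ G) = (I ∩ J) ⋊ G. -/
open scoped ComplexOrder

/-- A partial dynamical system: a partial action of a group `G` on a C*-algebra `A`
by *-isomorphisms `θ g : I g⁻¹ → I g` between closed two-sided ideals. -/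
structure PartialDynSys (G : Type*) [Group G] (A : Type*)
    [NonUnitalNormedRing A] [StarRing A] [CStarRing A]
    [NormedSpace ℂ A] [IsScalarTower ℂ A A] [SMulCommClass ℂ A A]
    [StarModule ℂ A] [CompleteSpace A] where
  I : G → Submodule ℂ A
  closed : ∀ g, IsClosed ((I g : Set A))
  ideal_left : ∀ g, ∀ a ∈ I g, ∀ b : A, b * a ∈ I g
  ideal_right : ∀ g, ∀ a ∈ I g, ∀ b : A, a * b ∈ I g
  θ : G → A → A
  bijOn : ∀ g, Set.BijOn (θ g) ((I g⁻¹ : Submodule ℂ A) : Set A) ((I g : Submodule ℂ A) : Set A)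
  map_add : ∀ g, ∀ a ∈ I g⁻¹, ∀ b ∈ I g⁻¹, θ g (a + b) = θ g a + θ g b
  map_smul : ∀ g, ∀ c : ℂ, ∀ a ∈ I g⁻¹, θ g (c • a) = c • θ g a
  map_mul : ∀ g, ∀ a ∈ I g⁻¹, ∀ b ∈ I g⁻¹, θ g (a * b) = θ g a * θ g b
  map_star : ∀ g, ∀ a ∈ I g⁻¹, θ g (star a) = star (θ g a)
  one : ∀ a : A, θ 1 a = a
  compat : ∀ g h : G, ∀ a ∈ I g⁻¹, θ g a ∈ I h⁻¹ →
    a ∈ I (h * g)⁻¹ ∧ θ (h * g) a = θ h (θ g a)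

/-- A covariant representation of a partial dynamical system in a C*-algebra `C`:
maps `γ g : I g → C` satisfying the algebraic relations of the partial crossed
product (`γ g a` corresponds to `a δ_g`). -/
def CovariantRep {G : Type*} [Group G] {A : Type*}
    [NonUnitalNormedRing A] [StarRing A] [CStarRing A]
    [NormedSpace ℂ A] [IsScalarTower ℂ A A] [SMulCommClass ℂ A A]
    [StarModule ℂ A] [CompleteSpace A]
    (P : PartialDynSys G A) (C : Type*)
    [NonUnitalNormedRing C] [StarRing C] [CStarRing C]
    [NormedSpace ℂ C] [IsScalarTower ℂ C C] [SMulCommClass ℂ C C]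
    [StarModule ℂ C] [CompleteSpace C]
    (γ : G → A → C) : Prop :=
  (∀ g, ∀ a ∈ P.I g, ∀ b ∈ P.I g, γ g (a + b) = γ g a + γ g b) ∧
  (∀ g, ∀ c : ℂ, ∀ a ∈ P.I g, γ g (c • a) = c • γ g a) ∧
  (∀ g h : G, ∀ a ∈ P.I g, ∀ b ∈ P.I h,
    γ g a * γ h b = γ (g * h) (P.θ g (P.θ g⁻¹ a * b))) ∧
  (∀ g, ∀ a ∈ P.I g, star (γ g a) = γ g⁻¹ (P.θ g⁻¹ (star a)))

/-- `B`, together with the maps `δ g : I g → B` (`δ g a` corresponding to `a δ_g`),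
is the (full) partial crossed product of the partial dynamical system `P`: it is a
covariant representation which is nondegenerate (dense span), faithful on `A`, and
universal among covariant representations. -/
structure IsPartialCrossedProduct {G : Type*} [Group G] {A : Type*}
    [NonUnitalNormedRing A] [StarRing A] [CStarRing A]
    [NormedSpace ℂ A] [IsScalarTower ℂ A A] [SMulCommClass ℂ A A]
    [StarModule ℂ A] [CompleteSpace A]
    (P : PartialDynSys G A) (B : Type*)
    [NonUnitalNormedRing B] [StarRing B] [CStarRing B]
    [NormedSpace ℂ B] [IsScalarTower ℂ B B] [SMulCommClass ℂ B B]
    [StarModule ℂ B] [CompleteSpace B]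
    (δ : G → A → B) : Prop where
  covariant : CovariantRep P B δ
  faithful : ∀ a : A, δ 1 a = 0 → a = 0
  dense_span : Dense ((Submodule.span ℂ {b : B | ∃ g, ∃ a ∈ P.I g, b = δ g a} : Submodule ℂ B) : Set B)
  universal : ∀ (C : Type) (_ : NonUnitalNormedRing C) (_ : StarRing C)
    (_ : CStarRing C) (_ : NormedSpace ℂ C) (_ : IsScalarTower ℂ C C)
    (_ : SMulCommClass ℂ C C) (_ : StarModule ℂ C) (_ : CompleteSpace C)
    (γ : G → A → C), CovariantRep P C γ →
    ∃ φ : B → C, Continuous φ ∧ (∀ x y : B, φ (x + y) = φ x + φ y) ∧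
      (∀ (c : ℂ) (x : B), φ (c • x) = c • φ x) ∧
      (∀ x y : B, φ (x * y) = φ x * φ y) ∧
      (∀ x : B, φ (star x) = star (φ x)) ∧
      ∀ g, ∀ a ∈ P.I g, φ (δ g a) = γ g a

/-- The closed ideal `K ⋊ G` of `A ⋊ G` associated to a `G`-invariant closed
two-sided ideal `K` of `A`: the closed span of `{a δ_g : a ∈ K ∩ I_g}`. -/
def idealCrossedProduct {G : Type*} [Group G] {A : Type*}
    [NonUnitalNormedRing A] [StarRing A] [CStarRing A]
    [NormedSpace ℂ A] [IsScalarTower ℂ A A] [SMulCommClass ℂ A A]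
    [StarModule ℂ A] [CompleteSpace A]
    (P : PartialDynSys G A)
    {B : Type*} [NonUnitalNormedRing B] [StarRing B] [CStarRing B]
    [NormedSpace ℂ B] [IsScalarTower ℂ B B] [SMulCommClass ℂ B B]
    [StarModule ℂ B] [CompleteSpace B]
    (δ : G → A → B) (K : Submodule ℂ A) : Submodule ℂ B :=
  (Submodule.span ℂ {b : B | ∃ g, ∃ a ∈ K ⊓ P.I g, b = δ g a}).topologicalClosure


open scoped ContinuousMapZero

section PDSAux

variable {G : Type*} [Group G] {A : Type*}
    [NonUnitalNormedRing A] [StarRing A] [CStarRing A]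
    [NormedSpace ℂ A] [IsScalarTower ℂ A A] [SMulCommClass ℂ A A]
    [StarModule ℂ A] [CompleteSpace A] (P : PartialDynSys G A)

lemma PartialDynSys.theta_mem (g : G) {a : A} (ha : a ∈ P.I g⁻¹) : P.θ g a ∈ P.I g :=
  (P.bijOn g).mapsTo ha

lemma PartialDynSys.theta_inv_mem (g : G) {a : A} (ha : a ∈ P.I g) : P.θ g⁻¹ a ∈ P.I g⁻¹ :=
  (P.bijOn g⁻¹).mapsTo (by rwa [inv_inv])

lemma PartialDynSys.theta_theta_inv (g : G) {a : A} (ha : a ∈ P.I g) :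
    P.θ g (P.θ g⁻¹ a) = a := by
  obtain ⟨-, h2⟩ := P.compat g⁻¹ g a (by rwa [inv_inv]) (P.theta_inv_mem g ha)
  rw [← h2, mul_inv_cancel, P.one]

lemma PartialDynSys.theta_inv_theta (g : G) {a : A} (ha : a ∈ P.I g⁻¹) :
    P.θ g⁻¹ (P.θ g a) = a := by
  have h := P.theta_theta_inv g⁻¹ (a := a) ha
  rwa [inv_inv] at h

lemma PartialDynSys.theta_mem_mul (g h : G) {x : A} (hx1 : x ∈ P.I g⁻¹) (hx2 : x ∈ P.I h) :
    P.θ g x ∈ P.I (g * h) := by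
  have h1 : P.θ g x ∈ P.I (g⁻¹)⁻¹ := by rw [inv_inv]; exact P.theta_mem g hx1
  have h2 : P.θ g⁻¹ (P.θ g x) ∈ P.I (h⁻¹)⁻¹ := by
    rw [inv_inv, P.theta_inv_theta g hx1]; exact hx2
  obtain ⟨hm, -⟩ := P.compat g⁻¹ h⁻¹ _ h1 h2
  simpa [mul_inv_rev] using hm

lemma PartialDynSys.key_right (K : Submodule ℂ A)
    (hKl : ∀ a ∈ K, ∀ b : A, b * a ∈ K)
    (hKinv : ∀ g : G, ∀ a ∈ K, a ∈ P.I g⁻¹ → P.θ g a ∈ K)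
    (g h : G) {a b : A} (hag : a ∈ P.I g) (hbK : b ∈ K) (hbh : b ∈ P.I h) :
    P.θ g (P.θ g⁻¹ a * b) ∈ K ⊓ P.I (g * h) := by
  have hu : P.θ g⁻¹ a ∈ P.I g⁻¹ := P.theta_inv_mem g hag
  have h1 : P.θ g⁻¹ a * b ∈ K := hKl b hbK _
  have h2 : P.θ g⁻¹ a * b ∈ P.I g⁻¹ := P.ideal_right g⁻¹ _ hu b
  have h3 : P.θ g⁻¹ a * b ∈ P.I h := P.ideal_left h b hbh _
  exact Submodule.mem_inf.mpr ⟨hKinv g _ h1 h2, P.theta_mem_mul g h h2 h3⟩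

lemma PartialDynSys.key_left (K : Submodule ℂ A)
    (hKr : ∀ a ∈ K, ∀ b : A, a * b ∈ K)
    (hKinv : ∀ g : G, ∀ a ∈ K, a ∈ P.I g⁻¹ → P.θ g a ∈ K)
    (g : G) {a : A} (b : A) (hag : a ∈ P.I g) (haK : a ∈ K) :
    P.θ g (P.θ g⁻¹ a * b) ∈ K := by
  have hu : P.θ g⁻¹ a ∈ P.I g⁻¹ := P.theta_inv_mem g hag
  have huK : P.θ g⁻¹ a ∈ K := hKinv g⁻¹ a haK (by rwa [inv_inv])
  have h1 : P.θ g⁻¹ a * b ∈ K := hKr _ huK b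
  have h2 : P.θ g⁻¹ a * b ∈ P.I g⁻¹ := P.ideal_right g⁻¹ _ hu b
  exact hKinv g _ h1 h2

end PDSAux

section SpanAux

variable {B : Type*} [NonUnitalNormedRing B]
    [NormedSpace ℂ B] [IsScalarTower ℂ B B] [SMulCommClass ℂ B B]

lemma mul_span_span_mem (S₁ S₂ : Set B) (M : Submodule ℂ B)
    (h : ∀ u ∈ S₁, ∀ v ∈ S₂, u * v ∈ M) :
    ∀ u ∈ Submodule.span ℂ S₁, ∀ v ∈ Submodule.span ℂ S₂, u * v ∈ M := by
  intro u hu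
  induction hu using Submodule.span_induction with
  | mem w hw =>
      intro v hv
      induction hv using Submodule.span_induction with
      | mem z hz => exact h w hw z hz
      | zero => rw [mul_zero]; exact M.zero_mem
      | add y z _ _ hy hz => rw [mul_add]; exact M.add_mem hy hz
      | smul c y _ hy => rw [mul_smul_comm]; exact M.smul_mem c hy
  | zero => intro v hv; rw [zero_mul]; exact M.zero_mem
  | add y z _ _ hy hz => intro v hv; rw [add_mul]; exact M.add_mem (hy v hv) (hz v hv)
  | smul c y _ hy => intro v hv; rw [smul_mul_assoc]; exact M.smul_mem c (hy v hv)

lemma mul_mem_of_closure (S₁ S₂ : Set B) (M : Submodule ℂ B) (hMc : IsClosed (M : Set B))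
    (h : ∀ u ∈ Submodule.span ℂ S₁, ∀ v ∈ Submodule.span ℂ S₂, u * v ∈ M)
    {u v : B} (hu : u ∈ closure (Submodule.span ℂ S₁ : Set B))
    (hv : v ∈ closure (Submodule.span ℂ S₂ : Set B)) : u * v ∈ M := by
  have step1 : ∀ v' ∈ (Submodule.span ℂ S₂ : Set B), u * v' ∈ M := by
    intro v' hv'
    have hcl : IsClosed {w : B | w * v' ∈ M} := hMc.preimage (continuous_mul_right v')
    exact hcl.closure_subset_iff.mpr (fun w hw => h w hw v' hv') hu
  have hcl : IsClosed {w : B | u * w ∈ M} := hMc.preimage (continuous_mul_left u)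
  exact hcl.closure_subset_iff.mpr step1 hv

end SpanAux

section Absorb

variable {G : Type*} [Group G] {A : Type*}
    [NonUnitalNormedRing A] [StarRing A] [CStarRing A]
    [NormedSpace ℂ A] [IsScalarTower ℂ A A] [SMulCommClass ℂ A A]
    [StarModule ℂ A] [CompleteSpace A] (P : PartialDynSys G A)
    {B : Type*} [NonUnitalNormedRing B] [StarRing B] [CStarRing B]
    [NormedSpace ℂ B] [IsScalarTower ℂ B B] [SMulCommClass ℂ B B]
    [StarModule ℂ B] [CompleteSpace B]
    (δ : G → A → B)

lemma idealCrossedProduct_absorb_left (hB : IsPartialCrossedProduct P B δ)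
    (J : Submodule ℂ A)
    (hJl : ∀ a ∈ J, ∀ b : A, b * a ∈ J)
    (hJinv : ∀ g : G, ∀ a ∈ J, a ∈ P.I g⁻¹ → P.θ g a ∈ J) :
    ∀ u : B, ∀ v ∈ idealCrossedProduct P δ J, u * v ∈ idealCrossedProduct P δ J := by
  intro u v hv
  have hMc : IsClosed ((idealCrossedProduct P δ J : Submodule ℂ B) : Set B) :=
    Submodule.isClosed_topologicalClosure _
  have hgen : ∀ w ∈ {b : B | ∃ g, ∃ a ∈ P.I g, b = δ g a},
      ∀ z ∈ {b : B | ∃ g, ∃ a ∈ J ⊓ P.I g, b = δ g a},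
      w * z ∈ idealCrossedProduct P δ J := by
    rintro w ⟨g, a, hag, rfl⟩ z ⟨h, b, hb, rfl⟩
    obtain ⟨hbJ, hbh⟩ := Submodule.mem_inf.mp hb
    rw [hB.covariant.2.2.1 g h a hag b hbh]
    exact Submodule.le_topologicalClosure _ <| Submodule.subset_span
      ⟨g * h, _, P.key_right J hJl hJinv g h hag hbJ hbh, rfl⟩
  have hspan := mul_span_span_mem _ _ _ hgen
  have hu' : u ∈ closure
      ((Submodule.span ℂ {b : B | ∃ g, ∃ a ∈ P.I g, b = δ g a} : Submodule ℂ B) : Set B) := by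
    rw [hB.dense_span.closure_eq]; trivial
  have hv' : v ∈ closure
      ((Submodule.span ℂ {b : B | ∃ g, ∃ a ∈ J ⊓ P.I g, b = δ g a} : Submodule ℂ B) : Set B) := by
    rw [← Submodule.topologicalClosure_coe]; exact hv
  exact mul_mem_of_closure _ _ _ hMc hspan hu' hv'

end Absorb

section CStarAux
variable {B : Type*} [NonUnitalCStarAlgebra B]

local notation "σₙ" => quasispectrum

lemma cfcₙ_mem_of_closed_left_ideal (L : Submodule ℂ B) (hLc : IsClosed (L : Set B))
    (hLl : ∀ y ∈ L, ∀ c : B, c * y ∈ L) (a : B) (ha : IsSelfAdjoint a) (haL : a ∈ L)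
    (f : ℝ → ℝ) : cfcₙ f a ∈ L := by
  by_cases hf : ContinuousOn f (σₙ ℝ a) ∧ f 0 = 0
  · rw [cfcₙ_apply f a hf.1 hf.2 ha]
    have h0 : ((0 : σₙ ℝ a) : ℝ) = 0 := rfl
    suffices H : ∀ g : C(σₙ ℝ a, ℝ)₀, cfcₙHom ha g ∈ L from H _
    intro g
    induction g using ContinuousMapZero.induction_on_of_compact with
    | zero => rw [map_zero]; exact L.zero_mem
    | id => rw [cfcₙHom_id ha]; exact haL
    | star_id =>
        rw [map_star, cfcₙHom_id ha, ha.star_eq]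
        exact haL
    | add u v hu hv => rw [map_add]; exact L.add_mem hu hv
    | mul u v hu hv => rw [map_mul]; exact hLl _ hv _
    | smul r u hu =>
        rw [map_smul, ← algebraMap_smul ℂ r (cfcₙHom ha u)]
        exact L.smul_mem _ hu
    | frequently u hu =>
        have hcl : IsClosed {g : C(σₙ ℝ a, ℝ)₀ | cfcₙHom ha g ∈ L} :=
          hLc.preimage (cfcₙHom_isClosedEmbedding ha).continuous
        exact hcl.closure_subset (mem_closure_iff_frequently.mpr hu)
  · rcases not_and_or.mp hf with h | h
    · rw [cfcₙ_apply_of_not_continuousOn a h]; exact L.zero_mem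
    · rw [cfcₙ_apply_of_not_map_zero a h]; exact L.zero_mem

lemma approx_in_ideal (L : Submodule ℂ B) (hLc : IsClosed (L : Set B))
    (hLl : ∀ y ∈ L, ∀ c : B, c * y ∈ L) (x : B) (hx : x ∈ L) {ε : ℝ} (hε : 0 < ε) :
    ∃ b ∈ L, IsSelfAdjoint b ∧ ‖x - x * b‖ < ε := by
  set η : ℝ := (ε / 2) ^ 2 with hη_def
  have hη : 0 < η := by positivity
  set f : ℝ → ℝ := fun t => min (|t| / η) 1 with hf_def
  have hfc : Continuous f := (continuous_abs.div_const η).min continuous_const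
  have hf0 : f 0 = 0 := by simp [hf_def]
  set a : B := star x * x with ha_def
  have ha : IsSelfAdjoint a := IsSelfAdjoint.star_mul_self x
  have haL : a ∈ L := hLl x hx (star x)
  set b : B := cfcₙ f a with hb_def
  have hbL : b ∈ L := cfcₙ_mem_of_closed_left_ideal L hLc hLl a ha haL f
  have hbsa : IsSelfAdjoint b := cfcₙ_predicate f a
  refine ⟨b, hbL, hbsa, ?_⟩
  -- identify star y * y with a cfc
  have e1 : cfcₙ (fun t : ℝ => t * f t) a = a * b := by
    rw [cfcₙ_mul (fun t : ℝ => t) f a (continuousOn_id) rfl hfc.continuousOn hf0,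
      cfcₙ_id' ℝ a]
  have e2 : cfcₙ (fun t : ℝ => f t * t) a = b * a := by
    rw [cfcₙ_mul f (fun t : ℝ => t) a hfc.continuousOn hf0 (continuousOn_id) rfl,
      cfcₙ_id' ℝ a]
  have e3 : cfcₙ (fun t : ℝ => f t * (t * f t)) a = b * (a * b) := by
    rw [cfcₙ_mul f (fun t : ℝ => t * f t) a hfc.continuousOn hf0
      ((continuous_id.mul hfc).continuousOn) (by simp [hf0]), e1]
  have key : star (x - x * b) * (x - x * b) = cfcₙ (fun t : ℝ => t * (1 - f t) ^ 2) a := by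
    have hfun : (fun t : ℝ => t * (1 - f t) ^ 2) =
        fun t : ℝ => t - t * f t - (f t * t - f t * (t * f t)) := by
      funext t; ring
    rw [hfun, cfcₙ_sub (fun t : ℝ => t - t * f t) (fun t : ℝ => f t * t - f t * (t * f t)) a
        ((continuous_id.sub (continuous_id.mul hfc)).continuousOn) (by simp [hf0])
        (((hfc.mul continuous_id).sub (hfc.mul (continuous_id.mul hfc))).continuousOn)
        (by simp [hf0]),
      cfcₙ_sub (fun t : ℝ => t) (fun t : ℝ => t * f t) a continuousOn_id rfl
        ((continuous_id.mul hfc).continuousOn) (by simp [hf0]),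
      cfcₙ_sub (fun t : ℝ => f t * t) (fun t : ℝ => f t * (t * f t)) a
        ((hfc.mul continuous_id).continuousOn) (by simp [hf0])
        ((hfc.mul (continuous_id.mul hfc)).continuousOn) (by simp [hf0]),
      cfcₙ_id' ℝ a, e1, e2, e3]
    simp only [star_sub, star_mul, hbsa.star_eq, ha_def]
    noncomm_ring
  have hbound : ‖star (x - x * b) * (x - x * b)‖ ≤ η := by
    rw [key]
    refine norm_cfcₙ_le fun t _ => ?_
    rw [Real.norm_eq_abs, abs_mul, abs_pow]
    have hft0 : 0 ≤ f t := le_min (by positivity) zero_le_one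
    have hft1 : f t ≤ 1 := min_le_right _ _
    rcases le_or_gt |t| η with h | h
    · have h1 : |1 - f t| ≤ 1 := by rw [abs_le]; constructor <;> linarith
      have h2 : |1 - f t| ^ 2 ≤ 1 := by nlinarith [abs_nonneg (1 - f t)]
      calc |t| * |1 - f t| ^ 2 ≤ η * 1 := mul_le_mul h h2 (by positivity) hη.le
        _ = η := mul_one η
    · have : f t = 1 := by
        rw [hf_def]
        exact min_eq_right ((one_le_div hη).mpr h.le)
      simp [this, hη.le]
  have hyy : ‖x - x * b‖ * ‖x - x * b‖ ≤ η := by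
    rwa [← CStarRing.norm_star_mul_self]
  nlinarith [norm_nonneg (x - x * b), sq_nonneg (‖x - x * b‖ - ε / 2), mul_pos hε hε]

end CStarAux

/-- For `G`-invariant closed two-sided ideals `I, J` of `A`, inside `A ⋊ G` one has
`(I ⋊ G) ∩ (J ⋊ G) = (I ∩ J) ⋊ G`. -/
theorem idealCrossedProduct_inter
    {G : Type*} [Group G] {A : Type*}
    [NonUnitalNormedRing A] [StarRing A] [CStarRing A]
    [NormedSpace ℂ A] [IsScalarTower ℂ A A] [SMulCommClass ℂ A A]
    [StarModule ℂ A] [CompleteSpace A]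
    (P : PartialDynSys G A)
    {B : Type*} [NonUnitalNormedRing B] [StarRing B] [CStarRing B]
    [NormedSpace ℂ B] [IsScalarTower ℂ B B] [SMulCommClass ℂ B B]
    [StarModule ℂ B] [CompleteSpace B]
    (δ : G → A → B) (hB : IsPartialCrossedProduct P B δ)
    (I J : Submodule ℂ A)
    (hIc : IsClosed ((I : Set A))) (hJc : IsClosed ((J : Set A)))
    (hIl : ∀ a ∈ I, ∀ b : A, b * a ∈ I) (hIr : ∀ a ∈ I, ∀ b : A, a * b ∈ I)
    (hJl : ∀ a ∈ J, ∀ b : A, b * a ∈ J) (hJr : ∀ a ∈ J, ∀ b : A, a * b ∈ J)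
    (hIinv : ∀ g : G, ∀ a ∈ I, a ∈ P.I g⁻¹ → P.θ g a ∈ I)
    (hJinv : ∀ g : G, ∀ a ∈ J, a ∈ P.I g⁻¹ → P.θ g a ∈ J) :
    idealCrossedProduct P δ I ⊓ idealCrossedProduct P δ J =
      idealCrossedProduct P δ (I ⊓ J) := by
  refine le_antisymm ?_ (le_inf ?_ ?_)
  · -- hard inclusion
    intro x hx
    obtain ⟨hxI, hxJ⟩ := Submodule.mem_inf.mp hx
    letI : NonUnitalCStarAlgebra B :=
      { ‹NonUnitalNormedRing B›, ‹StarRing B›, ‹CompleteSpace B›, ‹CStarRing B›,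
        ‹NormedSpace ℂ B›, ‹IsScalarTower ℂ B B›, ‹SMulCommClass ℂ B B›,
        ‹StarModule ℂ B› with }
    have hMc : IsClosed ((idealCrossedProduct P δ (I ⊓ J) : Submodule ℂ B) : Set B) :=
      Submodule.isClosed_topologicalClosure _
    have hLc : IsClosed ((idealCrossedProduct P δ J : Submodule ℂ B) : Set B) :=
      Submodule.isClosed_topologicalClosure _
    have hLabs := idealCrossedProduct_absorb_left P δ hB J hJl hJinv
    have hLl : ∀ y ∈ idealCrossedProduct P δ J, ∀ c : B,
        c * y ∈ idealCrossedProduct P δ J := fun y hy c => hLabs c y hy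
    -- generators of I ⋊ G times generators of J ⋊ G land in (I ⊓ J) ⋊ G
    have hgen : ∀ w ∈ {b : B | ∃ g, ∃ a ∈ I ⊓ P.I g, b = δ g a},
        ∀ z ∈ {b : B | ∃ g, ∃ a ∈ J ⊓ P.I g, b = δ g a},
        w * z ∈ idealCrossedProduct P δ (I ⊓ J) := by
      rintro w ⟨g, a, ha, rfl⟩ z ⟨h, b, hb, rfl⟩
      obtain ⟨haI, hag⟩ := Submodule.mem_inf.mp ha
      obtain ⟨hbJ, hbh⟩ := Submodule.mem_inf.mp hb
      rw [hB.covariant.2.2.1 g h a hag b hbh]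
      have hJpart := Submodule.mem_inf.mp (P.key_right J hJl hJinv g h hag hbJ hbh)
      have hIpart := P.key_left I hIr hIinv g b hag haI
      refine Submodule.le_topologicalClosure _ <| Submodule.subset_span
        ⟨g * h, _, Submodule.mem_inf.mpr
          ⟨Submodule.mem_inf.mpr ⟨hIpart, hJpart.1⟩, hJpart.2⟩, rfl⟩
    have hspan := mul_span_span_mem _ _ _ hgen
    have hx' : x ∈ closure
        ((Submodule.span ℂ {b : B | ∃ g, ∃ a ∈ I ⊓ P.I g, b = δ g a} : Submodule ℂ B) : Set B) := by
      rw [← Submodule.topologicalClosure_coe]; exact hxI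
    rw [← SetLike.mem_coe, ← hMc.closure_eq]
    rw [Metric.mem_closure_iff]
    intro ε hε
    obtain ⟨b, hbL, -, hnorm⟩ := approx_in_ideal (idealCrossedProduct P δ J) hLc hLl x hxJ hε
    refine ⟨x * b, ?_, ?_⟩
    · have hb' : b ∈ closure
          ((Submodule.span ℂ {b : B | ∃ g, ∃ a ∈ J ⊓ P.I g, b = δ g a} : Submodule ℂ B) : Set B) := by
        rw [← Submodule.topologicalClosure_coe]; exact hbL
      exact mul_mem_of_closure _ _ _ hMc hspan hx' hb'
    · rw [dist_eq_norm]; exact hnorm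
  · -- (I ⊓ J) ⋊ G ≤ I ⋊ G
    refine Submodule.topologicalClosure_mono (Submodule.span_mono ?_)
    rintro b ⟨g, a, ha, rfl⟩
    obtain ⟨hIJ, hg⟩ := Submodule.mem_inf.mp ha
    exact ⟨g, a, Submodule.mem_inf.mpr ⟨(Submodule.mem_inf.mp hIJ).1, hg⟩, rfl⟩
  · -- (I ⊓ J) ⋊ G ≤ J ⋊ G
    refine Submodule.topologicalClosure_mono (Submodule.span_mono ?_)
    rintro b ⟨g, a, ha, rfl⟩
    obtain ⟨hIJ, hg⟩ := Submodule.mem_inf.mp ha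
    exact ⟨g, a, Submodule.mem_inf.mpr ⟨(Submodule.mem_inf.mp hIJ).2, hg⟩, rfl⟩
end

section
/- Let A be a C*-algebra, G ⋊_α H a semidirect product of groups, and (A, G ⋊_α H, {I_{(g,h)}}, {θ_{(g,h)}}) a partial dynamical system satisfying I_{(g,h)} ⊆ I_{(g,e)} ∩ I_{(e,h)} for all g ∈ G, h ∈ H. Then in fact I_{(g,h)} = I_{(g,e)} ∩ I_{(e,h)} for all g, h. -/
open scoped ComplexOrder

section Aux
variable {G : Type*} [Group G] {A : Type*}
    [NonUnitalNormedRing A] [StarRing A] [CStarRing A]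
    [NormedSpace ℂ A] [IsScalarTower ℂ A A] [SMulCommClass ℂ A A]
    [StarModule ℂ A] [CompleteSpace A] (P : PartialDynSys G A)

theorem PartialDynSys.inv_apply (x : G) (a : A) (ha : a ∈ P.I x⁻¹) :
    P.θ x⁻¹ (P.θ x a) = a := by
  have h1 : P.θ x a ∈ P.I (x⁻¹)⁻¹ := by
    rw [inv_inv]; exact (P.bijOn x).mapsTo ha
  obtain ⟨-, h2⟩ := P.compat x x⁻¹ a ha h1
  rw [← h2, inv_mul_cancel, P.one]

theorem PartialDynSys.mapsto (x y : G) (a : A) (hx : a ∈ P.I x⁻¹) (hy : a ∈ P.I y) :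
    P.θ x a ∈ P.I (x * y) := by
  have hy' : a ∈ P.I (y⁻¹)⁻¹ := by rwa [inv_inv]
  have hb : P.θ y⁻¹ a ∈ P.I y⁻¹ := (P.bijOn y⁻¹).mapsTo hy'
  have hθ : P.θ y (P.θ y⁻¹ a) = a := by
    have := P.inv_apply y⁻¹ a hy'
    rwa [inv_inv] at this
  obtain ⟨h1, h2⟩ := P.compat y x (P.θ y⁻¹ a) hb (by rwa [hθ])
  have := (P.bijOn (x * y)).mapsTo h1
  rwa [h2, hθ] at this

end Aux

/-- For a partial dynamical system over a semidirect product `G ⋊[α] H` whose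
domains satisfy `I_{(g,h)} ⊆ I_{(g,e)} ∩ I_{(e,h)}`, one in fact has
`I_{(g,h)} = I_{(g,e)} ∩ I_{(e,h)}`. -/
theorem semidirect_domains_eq
    {G H : Type*} [Group G] [Group H] (α : H →* MulAut G)
    {A : Type*} [NonUnitalNormedRing A] [StarRing A] [CStarRing A]
    [NormedSpace ℂ A] [IsScalarTower ℂ A A] [SMulCommClass ℂ A A]
    [StarModule ℂ A] [CompleteSpace A]
    (P : PartialDynSys (G ⋊[α] H) A)
    (hsub : ∀ (g : G) (h : H),
      P.I ⟨g, h⟩ ≤ P.I ⟨g, 1⟩ ⊓ P.I ⟨1, h⟩) :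
    ∀ (g : G) (h : H), P.I ⟨g, h⟩ = P.I ⟨g, 1⟩ ⊓ P.I ⟨1, h⟩ := by
  intro g h
  refine le_antisymm (hsub g h) ?_
  rintro a ha
  obtain ⟨ha1, ha2⟩ := ha
  set x : G ⋊[α] H := ⟨g, 1⟩ with hx
  have hxinv : x⁻¹ = (⟨g⁻¹, 1⟩ : G ⋊[α] H) := by
    ext <;> simp [hx, SemidirectProduct.inv_left, SemidirectProduct.inv_right]
  have hax : a ∈ P.I ((x⁻¹)⁻¹ : G ⋊[α] H) := by rwa [inv_inv]
  have hb1 : P.θ x⁻¹ a ∈ P.I x⁻¹ := (P.bijOn x⁻¹).mapsTo hax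
  have hmul1 : x⁻¹ * (⟨1, h⟩ : G ⋊[α] H) = ⟨g⁻¹, h⟩ := by
    rw [hxinv]; ext <;> simp [SemidirectProduct.mul_left, SemidirectProduct.mul_right]
  have hb2 : P.θ x⁻¹ a ∈ P.I (⟨g⁻¹, h⟩ : G ⋊[α] H) := by
    rw [← hmul1]; exact P.mapsto x⁻¹ ⟨1, h⟩ a hax ha2
  have hb3 : P.θ x⁻¹ a ∈ P.I (⟨1, h⟩ : G ⋊[α] H) := (hsub g⁻¹ h hb2).2
  have hmul2 : x * (⟨1, h⟩ : G ⋊[α] H) = ⟨g, h⟩ := by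
    ext <;> simp [hx, SemidirectProduct.mul_left, SemidirectProduct.mul_right]
  have key : P.θ x (P.θ x⁻¹ a) ∈ P.I (⟨g, h⟩ : G ⋊[α] H) := by
    rw [← hmul2]; exact P.mapsto x ⟨1, h⟩ (P.θ x⁻¹ a) hb1 hb3
  have heq : P.θ x (P.θ x⁻¹ a) = a := by
    have := P.inv_apply x⁻¹ a hax
    rwa [inv_inv] at this
  rwa [heq] at key
end

section
/- If G and H are supramenable groups, then for all nonempty A ⊆ G and B ⊆ H, the set A × B ⊆ G × H is not paradoxical. -/
open scoped ENNReal

lemma fam_mono {α : Type*} (μ : Set α → ℝ≥0∞)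
    (hadd : ∀ E F : Set α, Disjoint E F → μ (E ∪ F) = μ E + μ F)
    {X Y : Set α} (hXY : X ⊆ Y) : μ X ≤ μ Y := by
  have h : Y = X ∪ (Y \ X) := (Set.union_diff_cancel hXY).symm
  rw [h, hadd _ _ Set.disjoint_sdiff_right]
  exact le_self_add

lemma fa_biUnion {α β : Type*} (μ : Set α → ℝ≥0∞) (h0 : μ ∅ = 0)
    (hadd : ∀ E F : Set α, Disjoint E F → μ (E ∪ F) = μ E + μ F)
    (t : Finset β) (T : β → Set α)
    (hd : ∀ a ∈ t, ∀ b ∈ t, a ≠ b → Disjoint (T a) (T b)) :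
    μ (⋃ a ∈ t, T a) = ∑ a ∈ t, μ (T a) := by
  classical
  induction t using Finset.induction_on with
  | empty => simpa using h0
  | @insert a t' ha ih =>
    have hd' : ∀ x ∈ t', ∀ y ∈ t', x ≠ y → Disjoint (T x) (T y) := fun x hx y hy hxy =>
      hd x (Finset.mem_insert_of_mem hx) y (Finset.mem_insert_of_mem hy) hxy
    have hdisj : Disjoint (T a) (⋃ b ∈ t', T b) := by
      simp only [Set.disjoint_iUnion_right]
      intro b hb
      exact hd a (Finset.mem_insert_self a t') b (Finset.mem_insert_of_mem hb)
        (by rintro rfl; exact ha hb)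
    rw [Finset.set_biUnion_insert, Finset.sum_insert ha, hadd _ _ hdisj, ih hd']

open Finset in
lemma simple_repr {α δ γ : Type*} [Fintype δ] [DecidableEq δ] [Fintype γ]
    (μ : Set α → ℝ≥0∞) (h0 : μ ∅ = 0)
    (hadd : ∀ E F : Set α, Disjoint E F → μ (E ∪ F) = μ E + μ F)
    (S : δ → Set α) (e : γ → ℝ≥0∞) (emb : γ → δ) :
    ∑ i, e i * μ (S (emb i)) =
      ∑ u : Finset δ, (∑ i, e i * (if emb i ∈ u then 1 else 0)) *
        μ {x | ∀ l, x ∈ S l ↔ l ∈ u} := by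
  classical
  set atom : Finset δ → Set α := fun u => {x | ∀ l, x ∈ S l ↔ l ∈ u} with hatom
  have hdisj : ∀ u v : Finset δ, u ≠ v → Disjoint (atom u) (atom v) := by
    intro u v huv
    rw [Set.disjoint_left]
    intro x hxu hxv
    apply huv
    ext l
    rw [← hxu l, ← hxv l]
  have hdecomp : ∀ l : δ,
      μ (S l) = ∑ u ∈ univ.filter (fun u : Finset δ => l ∈ u), μ (atom u) := by
    intro l
    have hcover : S l = ⋃ u ∈ univ.filter (fun u : Finset δ => l ∈ u), atom u := by
      ext x
      simp only [Set.mem_iUnion, mem_filter, mem_univ, true_and]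
      constructor
      · intro hx
        refine ⟨univ.filter (fun l' => x ∈ S l'), by simpa using hx, fun l' => by simp [hatom]⟩
      · rintro ⟨u, hlu, hxu⟩
        exact (hxu l).mpr hlu
    rw [hcover, fa_biUnion μ h0 hadd _ _ (fun a _ b _ hab => hdisj a b hab)]
  calc ∑ i, e i * μ (S (emb i))
      = ∑ i, ∑ u : Finset δ, e i * ((if emb i ∈ u then 1 else 0) * μ (atom u)) := by
        refine Finset.sum_congr rfl fun i _ => ?_
        rw [hdecomp (emb i), Finset.mul_sum, Finset.sum_filter]
        refine Finset.sum_congr rfl fun u _ => ?_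
        by_cases hm : emb i ∈ u <;> simp [hm]
    _ = ∑ u : Finset δ, ∑ i, e i * ((if emb i ∈ u then 1 else 0) * μ (atom u)) :=
        Finset.sum_comm
    _ = ∑ u : Finset δ, (∑ i, e i * (if emb i ∈ u then 1 else 0)) * μ (atom u) := by
        refine Finset.sum_congr rfl fun u _ => ?_
        rw [Finset.sum_mul]
        exact Finset.sum_congr rfl fun i _ => by ring

open Finset in
lemma simple_mono {α : Type*} (μ : Set α → ℝ≥0∞) (h0 : μ ∅ = 0)
    (hadd : ∀ E F : Set α, Disjoint E F → μ (E ∪ F) = μ E + μ F)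
    {ι κ : Type*} [Fintype ι] [Fintype κ]
    (c : ι → ℝ≥0∞) (E : ι → Set α) (d : κ → ℝ≥0∞) (F : κ → Set α)
    (h : ∀ x, ∑ i, c i * (E i).indicator 1 x ≤ ∑ j, d j * (F j).indicator 1 x) :
    ∑ i, c i * μ (E i) ≤ ∑ j, d j * μ (F j) := by
  classical
  set S : ι ⊕ κ → Set α := Sum.elim E F with hS
  have hE : ∀ i, E i = S (Sum.inl i) := fun i => rfl
  have hF : ∀ j, F j = S (Sum.inr j) := fun j => rfl
  calc ∑ i, c i * μ (E i)
      = ∑ u : Finset (ι ⊕ κ), (∑ i, c i * (if Sum.inl i ∈ u then 1 else 0)) *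
          μ {x | ∀ l, x ∈ S l ↔ l ∈ u} := by
        simp_rw [hE]; exact simple_repr μ h0 hadd S c Sum.inl
    _ ≤ ∑ u : Finset (ι ⊕ κ), (∑ j, d j * (if Sum.inr j ∈ u then 1 else 0)) *
          μ {x | ∀ l, x ∈ S l ↔ l ∈ u} := by
        refine Finset.sum_le_sum fun u _ => ?_
        rcases Set.eq_empty_or_nonempty {x | ∀ l, x ∈ S l ↔ l ∈ u} with he | ⟨x, hx⟩
        · rw [he, h0, mul_zero, mul_zero]
        · refine mul_le_mul_left ?_ _
          have hmem : ∀ l, (S l).indicator (1 : α → ℝ≥0∞) x = if l ∈ u then 1 else 0 := by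
            intro l
            by_cases hl : l ∈ u
            · rw [if_pos hl, Set.indicator_of_mem ((hx l).mpr hl)]; rfl
            · rw [if_neg hl, Set.indicator_of_notMem (fun hc => hl ((hx l).mp hc))]
          calc ∑ i, c i * (if Sum.inl i ∈ u then 1 else 0)
              = ∑ i, c i * (E i).indicator 1 x := by
                refine Finset.sum_congr rfl fun i _ => by rw [hE, hmem]
            _ ≤ ∑ j, d j * (F j).indicator 1 x := h x
            _ = ∑ j, d j * (if Sum.inr j ∈ u then 1 else 0) := by
                refine Finset.sum_congr rfl fun j _ => by rw [hF, hmem]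
    _ = ∑ j, d j * μ (F j) := by
        simp_rw [hF]; exact (simple_repr μ h0 hadd S d Sum.inr).symm

open Finset in
lemma level_le {N : ℕ} (c : ℝ≥0∞) :
    ∑ k ∈ range N, (if ((k : ℝ≥0∞) + 1) / N ≤ c then (1:ℝ≥0∞)/N else 0) ≤ c := by
  classical
  rw [Finset.sum_ite, Finset.sum_const, Finset.sum_const_zero, add_zero, nsmul_eq_mul,
    mul_one_div]
  set K := (Finset.filter (fun k : ℕ => ((k : ℝ≥0∞) + 1) / N ≤ c) (range N)).card with hK
  rcases Nat.eq_zero_or_pos K with h0 | hpos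
  · rw [h0]; simp
  · have hne : (Finset.filter (fun k : ℕ => ((k : ℝ≥0∞) + 1) / N ≤ c) (range N)).Nonempty :=
      Finset.card_pos.mp hpos
    set M := Finset.max' _ hne with hM
    have hMf := Finset.max'_mem _ hne
    have hMc : ((M : ℝ≥0∞) + 1) / N ≤ c := (Finset.mem_filter.mp hMf).2
    have hsub : (Finset.filter (fun k : ℕ => ((k : ℝ≥0∞) + 1) / N ≤ c) (range N)) ⊆
        range (M + 1) := by
      intro k hk
      exact Finset.mem_range.mpr (Nat.lt_succ_of_le (Finset.le_max' _ k hk))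
    have hKM : K ≤ M + 1 := by
      rw [hK]; simpa using Finset.card_le_card hsub
    calc (K : ℝ≥0∞) / N ≤ ((M : ℝ≥0∞) + 1) / N := by
          apply ENNReal.div_le_div_right
          exact_mod_cast hKM
      _ ≤ c := hMc

open Finset in
lemma level_ge {N : ℕ} (hN : N ≠ 0) {c : ℝ≥0∞} (hc : c ≤ 1) :
    c ≤ (∑ k ∈ range N, (if ((k : ℝ≥0∞) + 1) / N ≤ c then (1:ℝ≥0∞)/N else 0)) + 1/N := by
  classical
  rw [Finset.sum_ite, Finset.sum_const, Finset.sum_const_zero, add_zero, nsmul_eq_mul,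
    mul_one_div, ENNReal.div_add_div_same]
  set K := (Finset.filter (fun k : ℕ => ((k : ℝ≥0∞) + 1) / N ≤ c) (range N)).card with hK
  have hN0 : (N : ℝ≥0∞) ≠ 0 := Nat.cast_ne_zero.mpr hN
  have hNt : (N : ℝ≥0∞) ≠ ⊤ := ENNReal.natCast_ne_top N
  rcases le_or_gt N K with hNK | hKN
  · calc c ≤ 1 := hc
      _ = (N : ℝ≥0∞) / N := (ENNReal.div_self hN0 hNt).symm
      _ ≤ ((K : ℝ≥0∞) + 1) / N := by
          apply ENNReal.div_le_div_right
          calc (N : ℝ≥0∞) ≤ (K : ℝ≥0∞) := by exact_mod_cast hNK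
            _ ≤ (K : ℝ≥0∞) + 1 := le_self_add
  · by_contra hcon
    push_neg at hcon
    have hKc : ((K : ℝ≥0∞) + 1) / N ≤ c := hcon.le
    have hsub : range (K + 1) ⊆
        Finset.filter (fun k : ℕ => ((k : ℝ≥0∞) + 1) / N ≤ c) (range N) := by
      intro k hk
      have hkK : k ≤ K := Nat.lt_succ_iff.mp (Finset.mem_range.mp hk)
      refine Finset.mem_filter.mpr ⟨Finset.mem_range.mpr (lt_of_le_of_lt hkK hKN), ?_⟩
      calc ((k : ℝ≥0∞) + 1) / N ≤ ((K : ℝ≥0∞) + 1) / N := by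
            apply ENNReal.div_le_div_right
            have h1 : (k : ℝ≥0∞) ≤ K := by exact_mod_cast hkK
            exact add_le_add_left h1 1
        _ ≤ c := hKc
    have h2 := Finset.card_le_card hsub
    rw [Finset.card_range] at h2
    omega

/-- If `G` and `H` are supramenable, then `A × B` is never a paradoxical subset of
`G × H`, for nonempty `A ⊆ G`, `B ⊆ H`. -/
theorem prod_not_paradoxical_of_supramenable
    {G H : Type*} [Group G] [Group H]
    (hG : Supramenable G) (hH : Supramenable H)
    (A : Set G) (B : Set H) (hA : A.Nonempty) (hB : B.Nonempty) :
    ¬ Paradoxical (A ×ˢ B) := by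
  classical
  rintro ⟨-, n, m, P, Q, s, t, hPA, hQA, hPd, hQd, hPQ, hPs, hPsD, hQt, hQtD⟩
  obtain ⟨μ, ⟨hμ0, hμadd, hμinv⟩, hμA⟩ := hG A hA
  obtain ⟨ν, ⟨hν0, hνadd, hνinv⟩, hνB⟩ := hH B hB
  -- slices of subsets of G × H
  set sl : Set (G × H) → G → Set H := fun S x => {y | (x, y) ∈ S} with hsl
  have hslImg : ∀ (p : G × H) (S : Set (G × H)) (x : G),
      sl ((p * ·) '' S) x = (p.2 * ·) '' sl S (p.1⁻¹ * x) := by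
    intro p S x
    ext y
    simp only [hsl, Set.mem_setOf_eq, Set.mem_image]
    constructor
    · rintro ⟨q, hqS, hq⟩
      have h1 : p.1 * q.1 = x := congrArg Prod.fst hq
      have h2 : p.2 * q.2 = y := congrArg Prod.snd hq
      refine ⟨q.2, ?_, h2⟩
      have hq1 : p.1⁻¹ * x = q.1 := by rw [← h1, inv_mul_cancel_left]
      rw [hq1]
      exact hqS
    · rintro ⟨z, hz, rfl⟩
      exact ⟨(p.1⁻¹ * x, z), hz, by
        simp only [Prod.ext_iff]
        exact ⟨mul_inv_cancel_left p.1 x, rfl⟩⟩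
  have hslSub : ∀ (S : Set (G × H)), S ⊆ A ×ˢ B → ∀ x, sl S x ⊆ B :=
    fun S hS x y hy => (hS hy).2
  have hslA : ∀ (S : Set (G × H)), S ⊆ A ×ˢ B → ∀ x, x ∉ A → sl S x = ∅ := by
    intro S hS x hx
    ext y
    simp only [hsl, Set.mem_setOf_eq, Set.mem_empty_iff_false, iff_false]
    intro hy
    exact hx (hS hy).1
  have hslD : ∀ (S T : Set (G × H)) (x : G), Disjoint S T → Disjoint (sl S x) (sl T x) := by
    intro S T x h
    rw [Set.disjoint_left] at h ⊢
    intro y hyS hyT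
    exact h hyS hyT
  -- the slice functions
  set f : Fin n → G → ℝ≥0∞ := fun i x => ν (sl (P i) x) with hfdef
  set g : Fin m → G → ℝ≥0∞ := fun j x => ν (sl (Q j) x) with hgdef
  have hf1 : ∀ i x, f i x ≤ 1 := fun i x =>
    hνB ▸ fam_mono ν hνadd (hslSub _ (hPA i) x)
  have hg1 : ∀ j x, g j x ≤ 1 := fun j x =>
    hνB ▸ fam_mono ν hνadd (hslSub _ (hQA j) x)
  have hf0 : ∀ i x, x ∉ A → f i x = 0 := by
    intro i x hx
    show ν (sl (P i) x) = 0
    rw [hslA _ (hPA i) x hx]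
    exact hν0
  have hg0 : ∀ j x, x ∉ A → g j x = 0 := by
    intro j x hx
    show ν (sl (Q j) x) = 0
    rw [hslA _ (hQA j) x hx]
    exact hν0
  -- additivity over finite unions of slices
  have sum_nu : ∀ (k : ℕ) (T : Fin k → Set H), (∀ a b, a ≠ b → Disjoint (T a) (T b)) →
      ν (⋃ i, T i) = ∑ i, ν (T i) := by
    intro k T hT
    rw [show (⋃ i, T i) = ⋃ i ∈ Finset.univ, T i by simp]
    exact fa_biUnion ν hν0 hνadd Finset.univ T (fun a _ b _ hab => hT a b hab)
  -- F1 : for x ∈ A the translated slices of the P i tile B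
  have hF1 : ∀ x ∈ A, ∑ i, f i ((s i).1⁻¹ * x) = 1 := by
    intro x hx
    have hBx : sl (A ×ˢ B) x = B := by
      ext y
      simp [hsl, hx]
    have hcomm : sl (⋃ i, (s i * ·) '' P i) x = ⋃ i, sl ((s i * ·) '' P i) x := by
      ext y
      simp [hsl]
    have hU : (⋃ i, sl ((s i * ·) '' P i) x) = B := by
      rw [← hcomm, hPs, hBx]
    calc ∑ i, f i ((s i).1⁻¹ * x)
        = ∑ i, ν (sl ((s i * ·) '' P i) x) := by
          refine Finset.sum_congr rfl fun i _ => ?_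
          rw [hslImg]
          exact (hνinv (s i).2 _).symm
      _ = ν (⋃ i, sl ((s i * ·) '' P i) x) :=
          (sum_nu n _ (fun a b hab => hslD _ _ x (hPsD a b hab))).symm
      _ = ν B := by rw [hU]
      _ = 1 := hνB
  have hG1 : ∀ x ∈ A, ∑ j, g j ((t j).1⁻¹ * x) = 1 := by
    intro x hx
    have hBx : sl (A ×ˢ B) x = B := by
      ext y
      simp [hsl, hx]
    have hcomm : sl (⋃ j, (t j * ·) '' Q j) x = ⋃ j, sl ((t j * ·) '' Q j) x := by
      ext y
      simp [hsl]
    have hU : (⋃ j, sl ((t j * ·) '' Q j) x) = B := by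
      rw [← hcomm, hQt, hBx]
    calc ∑ j, g j ((t j).1⁻¹ * x)
        = ∑ j, ν (sl ((t j * ·) '' Q j) x) := by
          refine Finset.sum_congr rfl fun j _ => ?_
          rw [hslImg]
          exact (hνinv (t j).2 _).symm
      _ = ν (⋃ j, sl ((t j * ·) '' Q j) x) :=
          (sum_nu m _ (fun a b hab => hslD _ _ x (hQtD a b hab))).symm
      _ = ν B := by rw [hU]
      _ = 1 := hνB
  -- F2 : all slices at a point are disjoint inside B
  have hF2 : ∀ x, (∑ i, f i x) + (∑ j, g j x) ≤ A.indicator (1 : G → ℝ≥0∞) x := by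
    intro x
    by_cases hx : x ∈ A
    · rw [Set.indicator_of_mem hx, Pi.one_apply]
      have hUf : ∑ i, f i x = ν (⋃ i, sl (P i) x) :=
        (sum_nu n _ (fun a b hab => hslD _ _ x (hPd a b hab))).symm
      have hUg : ∑ j, g j x = ν (⋃ j, sl (Q j) x) :=
        (sum_nu m _ (fun a b hab => hslD _ _ x (hQd a b hab))).symm
      have hUV : Disjoint (⋃ i, sl (P i) x) (⋃ j, sl (Q j) x) := by
        rw [Set.disjoint_left]
        intro y hy1 hy2
        simp only [Set.mem_iUnion] at hy1 hy2
        obtain ⟨i, hi⟩ := hy1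
        obtain ⟨j, hj⟩ := hy2
        exact Set.disjoint_left.mp hPQ (Set.mem_iUnion.mpr ⟨i, hi⟩) (Set.mem_iUnion.mpr ⟨j, hj⟩)
      rw [hUf, hUg, ← hνadd _ _ hUV]
      calc ν ((⋃ i, sl (P i) x) ∪ ⋃ j, sl (Q j) x) ≤ ν B := by
            refine fam_mono ν hνadd (Set.union_subset ?_ ?_)
            · exact Set.iUnion_subset fun i => hslSub _ (hPA i) x
            · exact Set.iUnion_subset fun j => hslSub _ (hQA j) x
        _ = 1 := hνB
    · rw [Set.indicator_of_notMem hx]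
      have h1 : ∑ i, f i x = 0 := Finset.sum_eq_zero fun i _ => hf0 i x hx
      have h2 : ∑ j, g j x = 0 := Finset.sum_eq_zero fun j _ => hg0 j x hx
      rw [h1, h2, add_zero]
  -- discretization
  set N : ℕ := n + m + 1 with hNdef
  have hNne : N ≠ 0 := by omega
  have hN0' : (N : ℝ≥0∞) ≠ 0 := Nat.cast_ne_zero.mpr hNne
  have hNt' : (N : ℝ≥0∞) ≠ ⊤ := ENNReal.natCast_ne_top N
  set E : Fin n → Fin N → Set G :=
    fun i k => {x | (((k : ℕ) : ℝ≥0∞) + 1) / (N : ℝ≥0∞) ≤ f i x} with hEdef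
  set Fg : Fin m → Fin N → Set G :=
    fun j k => {x | (((k : ℕ) : ℝ≥0∞) + 1) / (N : ℝ≥0∞) ≤ g j x} with hFdef
  have hEsum : ∀ (i : Fin n) (x : G), ∑ k : Fin N, (1 / N : ℝ≥0∞) * (E i k).indicator 1 x
      = ∑ k ∈ Finset.range N, (if ((k : ℝ≥0∞) + 1) / N ≤ f i x then (1:ℝ≥0∞)/N else 0) := by
    intro i x
    rw [← Fin.sum_univ_eq_sum_range
      (fun k : ℕ => if ((k : ℝ≥0∞) + 1) / (N : ℝ≥0∞) ≤ f i x then (1:ℝ≥0∞)/N else 0) N]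
    refine Finset.sum_congr rfl fun k _ => ?_
    by_cases hk : (((k : ℕ) : ℝ≥0∞) + 1) / (N : ℝ≥0∞) ≤ f i x
    · rw [if_pos hk, Set.indicator_of_mem (show x ∈ E i k by rw [hEdef]; exact hk),
        Pi.one_apply, mul_one]
    · rw [if_neg hk, Set.indicator_of_notMem (show x ∉ E i k by rw [hEdef]; exact hk), mul_zero]
  have hFsum : ∀ (j : Fin m) (x : G), ∑ k : Fin N, (1 / N : ℝ≥0∞) * (Fg j k).indicator 1 x
      = ∑ k ∈ Finset.range N, (if ((k : ℝ≥0∞) + 1) / N ≤ g j x then (1:ℝ≥0∞)/N else 0) := by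
    intro j x
    rw [← Fin.sum_univ_eq_sum_range
      (fun k : ℕ => if ((k : ℝ≥0∞) + 1) / (N : ℝ≥0∞) ≤ g j x then (1:ℝ≥0∞)/N else 0) N]
    refine Finset.sum_congr rfl fun k _ => ?_
    by_cases hk : (((k : ℕ) : ℝ≥0∞) + 1) / (N : ℝ≥0∞) ≤ g j x
    · rw [if_pos hk, Set.indicator_of_mem (show x ∈ Fg j k by rw [hFdef]; exact hk),
        Pi.one_apply, mul_one]
    · rw [if_neg hk, Set.indicator_of_notMem (show x ∉ Fg j k by rw [hFdef]; exact hk), mul_zero]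
  -- lower and upper simple approximations
  have hEle : ∀ (i : Fin n) (x : G),
      ∑ k : Fin N, (1 / N : ℝ≥0∞) * (E i k).indicator 1 x ≤ f i x := by
    intro i x
    rw [hEsum i x]
    exact level_le (f i x)
  have hFle : ∀ (j : Fin m) (x : G),
      ∑ k : Fin N, (1 / N : ℝ≥0∞) * (Fg j k).indicator 1 x ≤ g j x := by
    intro j x
    rw [hFsum j x]
    exact level_le (g j x)
  have hfE : ∀ (i : Fin n) (z : G), f i z ≤
      (∑ k : Fin N, (1 / N : ℝ≥0∞) * (E i k).indicator 1 z)
        + (1 / N : ℝ≥0∞) * A.indicator 1 z := by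
    intro i z
    by_cases hz : z ∈ A
    · rw [Set.indicator_of_mem hz, Pi.one_apply, mul_one, hEsum i z]
      exact level_ge hNne (hf1 i z)
    · rw [hf0 i z hz]
      exact zero_le
  have hgF : ∀ (j : Fin m) (z : G), g j z ≤
      (∑ k : Fin N, (1 / N : ℝ≥0∞) * (Fg j k).indicator 1 z)
        + (1 / N : ℝ≥0∞) * A.indicator 1 z := by
    intro j z
    by_cases hz : z ∈ A
    · rw [Set.indicator_of_mem hz, Pi.one_apply, mul_one, hFsum j z]
      exact level_ge hNne (hg1 j z)
    · rw [hg0 j z hz]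
      exact zero_le
  -- indicator of translated set
  have himg : ∀ (a : G) (X : Set G) (x : G),
      ((a * ·) '' X).indicator (1 : G → ℝ≥0∞) x = X.indicator 1 (a⁻¹ * x) := by
    intro a X x
    by_cases hmem : a⁻¹ * x ∈ X
    · rw [Set.indicator_of_mem hmem,
        Set.indicator_of_mem (show x ∈ (a * ·) '' X from ⟨a⁻¹ * x, hmem, mul_inv_cancel_left a x⟩)]
      rfl
    · rw [Set.indicator_of_notMem hmem, Set.indicator_of_notMem ?_]
      rintro ⟨z, hz, hzx⟩
      apply hmem
      have : a⁻¹ * x = z := by rw [← hzx]; exact inv_mul_cancel_left a z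
      rw [this]
      exact hz
  -- Application 2 : upper bound
  have happ2 : (∑ p : Fin n × Fin N, (1 / N : ℝ≥0∞) * μ (E p.1 p.2)) +
      (∑ p : Fin m × Fin N, (1 / N : ℝ≥0∞) * μ (Fg p.1 p.2)) ≤ 1 := by
    have hmain := simple_mono μ hμ0 hμadd
      (fun _ : (Fin n × Fin N) ⊕ (Fin m × Fin N) => (1 / N : ℝ≥0∞))
      (Sum.elim (fun p => E p.1 p.2) (fun p => Fg p.1 p.2))
      (fun _ : Unit => (1 : ℝ≥0∞)) (fun _ => A) ?_
    · rw [Fintype.sum_sum_type] at hmain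
      simp only [Sum.elim_inl, Sum.elim_inr] at hmain
      calc (∑ p : Fin n × Fin N, (1 / N : ℝ≥0∞) * μ (E p.1 p.2)) +
            (∑ p : Fin m × Fin N, (1 / N : ℝ≥0∞) * μ (Fg p.1 p.2))
          ≤ ∑ _ : Unit, 1 * μ A := hmain
        _ = 1 := by simp [hμA]
    · intro x
      rw [Fintype.sum_sum_type]
      simp only [Sum.elim_inl, Sum.elim_inr]
      have hfpart : ∑ p : Fin n × Fin N, (1 / N : ℝ≥0∞) * (E p.1 p.2).indicator 1 x
          ≤ ∑ i, f i x := by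
        rw [Fintype.sum_prod_type]
        exact Finset.sum_le_sum fun i _ => hEle i x
      have hgpart : ∑ p : Fin m × Fin N, (1 / N : ℝ≥0∞) * (Fg p.1 p.2).indicator 1 x
          ≤ ∑ j, g j x := by
        rw [Fintype.sum_prod_type]
        exact Finset.sum_le_sum fun j _ => hFle j x
      calc (∑ p : Fin n × Fin N, (1 / N : ℝ≥0∞) * (E p.1 p.2).indicator 1 x) +
            (∑ p : Fin m × Fin N, (1 / N : ℝ≥0∞) * (Fg p.1 p.2).indicator 1 x)
          ≤ (∑ i, f i x) + (∑ j, g j x) := add_le_add hfpart hgpart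
        _ ≤ A.indicator 1 x := hF2 x
        _ = ∑ _ : Unit, 1 * A.indicator 1 x := by simp
  -- Application 1 : lower bounds
  have happ1f : (1 : ℝ≥0∞) ≤ (∑ p : Fin n × Fin N, (1 / N : ℝ≥0∞) * μ (E p.1 p.2))
      + (n : ℝ≥0∞) / N := by
    have hmain := simple_mono μ hμ0 hμadd (fun _ : Unit => (1 : ℝ≥0∞)) (fun _ => A)
      (fun _ : (Fin n × Fin N) ⊕ Fin n => (1 / N : ℝ≥0∞))
      (Sum.elim (fun p => ((s p.1).1 * ·) '' E p.1 p.2) (fun i => ((s i).1 * ·) '' A)) ?_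
    · rw [Fintype.sum_sum_type] at hmain
      simp only [Sum.elim_inl, Sum.elim_inr] at hmain
      have h1 : ∀ p : Fin n × Fin N, μ (((s p.1).1 * ·) '' E p.1 p.2) = μ (E p.1 p.2) :=
        fun p => hμinv _ _
      have h2 : ∀ i : Fin n, μ (((s i).1 * ·) '' A) = μ A := fun i => hμinv _ _
      simp only [h1, h2, hμA, mul_one] at hmain
      calc (1 : ℝ≥0∞) = ∑ _ : Unit, (1 : ℝ≥0∞) := by simp
        _ ≤ (∑ p : Fin n × Fin N, (1 / N : ℝ≥0∞) * μ (E p.1 p.2))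
            + ∑ _ : Fin n, (1 / N : ℝ≥0∞) := hmain
        _ = (∑ p : Fin n × Fin N, (1 / N : ℝ≥0∞) * μ (E p.1 p.2)) + (n : ℝ≥0∞) / N := by
            rw [Finset.sum_const, Finset.card_univ, Fintype.card_fin, nsmul_eq_mul, mul_one_div]
    · intro x
      by_cases hx : x ∈ A
      · rw [Fintype.sum_sum_type]
        simp only [Sum.elim_inl, Sum.elim_inr]
        have hL : ∑ _ : Unit, (1 : ℝ≥0∞) * A.indicator 1 x = 1 := by
          simp [Set.indicator_of_mem hx]
        rw [hL]
        calc (1 : ℝ≥0∞) = ∑ i, f i ((s i).1⁻¹ * x) := (hF1 x hx).symm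
          _ ≤ ∑ i, ((∑ k : Fin N, (1 / N : ℝ≥0∞) * (E i k).indicator 1 ((s i).1⁻¹ * x))
                + (1 / N : ℝ≥0∞) * A.indicator 1 ((s i).1⁻¹ * x)) :=
              Finset.sum_le_sum fun i _ => hfE i ((s i).1⁻¹ * x)
          _ = (∑ p : Fin n × Fin N,
                (1 / N : ℝ≥0∞) * (((s p.1).1 * ·) '' E p.1 p.2).indicator 1 x)
              + ∑ i, (1 / N : ℝ≥0∞) * (((s i).1 * ·) '' A).indicator 1 x := by
            rw [Finset.sum_add_distrib, Fintype.sum_prod_type]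
            congr 1
            · refine Finset.sum_congr rfl fun i _ => Finset.sum_congr rfl fun k _ => ?_
              rw [himg]
            · refine Finset.sum_congr rfl fun i _ => ?_
              rw [himg]
      · rw [show ∑ _ : Unit, (1 : ℝ≥0∞) * A.indicator 1 x = 0 by
          simp [Set.indicator_of_notMem hx]]
        exact zero_le
  have happ1g : (1 : ℝ≥0∞) ≤ (∑ p : Fin m × Fin N, (1 / N : ℝ≥0∞) * μ (Fg p.1 p.2))
      + (m : ℝ≥0∞) / N := by
    have hmain := simple_mono μ hμ0 hμadd (fun _ : Unit => (1 : ℝ≥0∞)) (fun _ => A)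
      (fun _ : (Fin m × Fin N) ⊕ Fin m => (1 / N : ℝ≥0∞))
      (Sum.elim (fun p => ((t p.1).1 * ·) '' Fg p.1 p.2) (fun j => ((t j).1 * ·) '' A)) ?_
    · rw [Fintype.sum_sum_type] at hmain
      simp only [Sum.elim_inl, Sum.elim_inr] at hmain
      have h1 : ∀ p : Fin m × Fin N, μ (((t p.1).1 * ·) '' Fg p.1 p.2) = μ (Fg p.1 p.2) :=
        fun p => hμinv _ _
      have h2 : ∀ j : Fin m, μ (((t j).1 * ·) '' A) = μ A := fun j => hμinv _ _
      simp only [h1, h2, hμA, mul_one] at hmain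
      calc (1 : ℝ≥0∞) = ∑ _ : Unit, (1 : ℝ≥0∞) := by simp
        _ ≤ (∑ p : Fin m × Fin N, (1 / N : ℝ≥0∞) * μ (Fg p.1 p.2))
            + ∑ _ : Fin m, (1 / N : ℝ≥0∞) := hmain
        _ = (∑ p : Fin m × Fin N, (1 / N : ℝ≥0∞) * μ (Fg p.1 p.2)) + (m : ℝ≥0∞) / N := by
            rw [Finset.sum_const, Finset.card_univ, Fintype.card_fin, nsmul_eq_mul, mul_one_div]
    · intro x
      by_cases hx : x ∈ A
      · rw [Fintype.sum_sum_type]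
        simp only [Sum.elim_inl, Sum.elim_inr]
        have hL : ∑ _ : Unit, (1 : ℝ≥0∞) * A.indicator 1 x = 1 := by
          simp [Set.indicator_of_mem hx]
        rw [hL]
        calc (1 : ℝ≥0∞) = ∑ j, g j ((t j).1⁻¹ * x) := (hG1 x hx).symm
          _ ≤ ∑ j, ((∑ k : Fin N, (1 / N : ℝ≥0∞) * (Fg j k).indicator 1 ((t j).1⁻¹ * x))
                + (1 / N : ℝ≥0∞) * A.indicator 1 ((t j).1⁻¹ * x)) :=
              Finset.sum_le_sum fun j _ => hgF j ((t j).1⁻¹ * x)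
          _ = (∑ p : Fin m × Fin N,
                (1 / N : ℝ≥0∞) * (((t p.1).1 * ·) '' Fg p.1 p.2).indicator 1 x)
              + ∑ j, (1 / N : ℝ≥0∞) * (((t j).1 * ·) '' A).indicator 1 x := by
            rw [Finset.sum_add_distrib, Fintype.sum_prod_type]
            congr 1
            · refine Finset.sum_congr rfl fun j _ => Finset.sum_congr rfl fun k _ => ?_
              rw [himg]
            · refine Finset.sum_congr rfl fun j _ => ?_
              rw [himg]
      · rw [show ∑ _ : Unit, (1 : ℝ≥0∞) * A.indicator 1 x = 0 by
          simp [Set.indicator_of_notMem hx]]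
        exact zero_le
  -- final contradiction
  have hc : ((n : ℝ≥0∞) + m) / N < 1 := by
    rw [ENNReal.div_lt_iff (Or.inl hN0') (Or.inl hNt'), one_mul]
    rw [show ((n : ℝ≥0∞) + m) = ((n + m : ℕ) : ℝ≥0∞) by push_cast; ring]
    exact_mod_cast (show n + m < N by omega)
  have hsum2 : (1 : ℝ≥0∞) + 1 ≤ 1 + ((n : ℝ≥0∞) + m) / N := by
    calc (1 : ℝ≥0∞) + 1
        ≤ ((∑ p : Fin n × Fin N, (1 / N : ℝ≥0∞) * μ (E p.1 p.2)) + (n : ℝ≥0∞) / N) +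
          ((∑ p : Fin m × Fin N, (1 / N : ℝ≥0∞) * μ (Fg p.1 p.2)) + (m : ℝ≥0∞) / N) :=
          add_le_add happ1f happ1g
      _ = ((∑ p : Fin n × Fin N, (1 / N : ℝ≥0∞) * μ (E p.1 p.2)) +
            (∑ p : Fin m × Fin N, (1 / N : ℝ≥0∞) * μ (Fg p.1 p.2))) +
          ((n : ℝ≥0∞) / N + (m : ℝ≥0∞) / N) := add_add_add_comm _ _ _ _
      _ ≤ 1 + ((n : ℝ≥0∞) + m) / N :=
          add_le_add happ2 (le_of_eq ENNReal.div_add_div_same)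
  have hfin := (ENNReal.add_le_add_iff_left ENNReal.one_ne_top).mp hsum2
  exact absurd hfin (not_le.mpr hc)
end
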